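/- arXiv:1811.02612 — 8 statements merged into one kernel-verified Lean document; each statement's English description precedes it below -/
import Mathlib

section
/- Gamma function ratio bound: for any positive integers x and y and any real constant β > 0, log(Γ(x+β)/Γ(y+β)) ≤ x·log x − y·log y − (x − y) + β²/(y+β) + (β+2)·|log((y+β)/(x+β))|, where Γ is the Gamma function. -/
/-- lower bound `(q-p)/q ≤ log (q/p)` -/
lemma grb_log_lb {p q : ℝ} (hp : 0 < p) (hpq : p ≤ q) :
    (q - p) / q ≤ Real.log q - Real.log p := by
  have hq : 0 < q := lt_of_lt_of_le hp hpq
  have h := Real.log_le_sub_one_of_pos (show (0:ℝ) < p / q by positivity)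
  rw [Real.log_div (ne_of_gt hp) (ne_of_gt hq)] at h
  have : p / q - 1 = -((q - p) / q) := by field_simp; ring
  linarith [this ▸ h]

/-- upper bound `log (q/p) ≤ (q-p)/p` -/
lemma grb_log_ub {p q : ℝ} (hp : 0 < p) (hpq : p ≤ q) :
    Real.log q - Real.log p ≤ (q - p) / p := by
  have hq : 0 < q := lt_of_lt_of_le hp hpq
  have h := Real.log_le_sub_one_of_pos (show (0:ℝ) < q / p by positivity)
  rw [Real.log_div (ne_of_gt hq) (ne_of_gt hp)] at h
  have : q / p - 1 = (q - p) / p := by field_simp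
  linarith [this ▸ h]

/-- single step: `log c + 1 ≤ F(c+1) - F(c)` with `F t = t log t`. -/
lemma grb_step_lb {c : ℝ} (hc : 0 < c) :
    Real.log c + 1 ≤ (c + 1) * Real.log (c + 1) - c * Real.log c := by
  have h := grb_log_lb hc (show c ≤ c + 1 by linarith)
  have h1 : ((c + 1) - c) / (c + 1) = 1 / (c + 1) := by ring_nf
  rw [h1] at h
  have h2 : (c + 1) * (1 / (c + 1)) = 1 := by field_simp
  nlinarith [mul_le_mul_of_nonneg_left h (show (0:ℝ) ≤ c + 1 by linarith)]

/-- single step: `F(c+1) - F(c) ≤ log (c+1) + 1`. -/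
lemma grb_step_ub {c : ℝ} (hc : 0 < c) :
    (c + 1) * Real.log (c + 1) - c * Real.log c ≤ Real.log (c + 1) + 1 := by
  have h := grb_log_ub hc (show c ≤ c + 1 by linarith)
  have h1 : ((c + 1) - c) / c = 1 / c := by ring_nf
  rw [h1] at h
  have h2 : c * (1 / c) = 1 := by field_simp
  nlinarith [mul_le_mul_of_nonneg_left h (show (0:ℝ) ≤ c by linarith)]

lemma grb_sum_log_le (b : ℝ) (hb : 0 < b) (n : ℕ) :
    ∑ k ∈ Finset.range n, Real.log (b + k) ≤
      (b + n) * Real.log (b + n) - (b + n) - (b * Real.log b - b) := by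
  induction n with
  | zero => simp
  | succ n ih =>
    rw [Finset.sum_range_succ]
    have hbn : (0:ℝ) < b + n := by positivity
    have step := grb_step_lb hbn
    push_cast
    push_cast at ih
    have e : b + ((n:ℝ) + 1) = b + (n:ℝ) + 1 := by ring
    rw [e]
    linarith

lemma grb_le_sum_log (a : ℝ) (ha : 0 < a) (n : ℕ) :
    (a + n) * Real.log (a + n) - (a + n) - (a * Real.log a - a) ≤
      ∑ k ∈ Finset.range n, Real.log (a + k + 1) := by
  induction n with
  | zero => simp
  | succ n ih =>
    rw [Finset.sum_range_succ]
    have han : (0:ℝ) < a + n := by positivity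
    have step := grb_step_ub han
    push_cast
    push_cast at ih
    have e : a + ((n:ℝ) + 1) = a + (n:ℝ) + 1 := by ring
    rw [e]
    linarith

lemma grb_sum_shift (a : ℝ) (n : ℕ) :
    ∑ k ∈ Finset.range n, Real.log (a + k + 1) =
      ∑ k ∈ Finset.range n, Real.log (a + k) + Real.log (a + n) - Real.log a := by
  have h := Finset.sum_range_succ' (fun k : ℕ => Real.log (a + k)) n
  have h2 := Finset.sum_range_succ (fun k : ℕ => Real.log (a + k)) n
  have e : ∀ k : ℕ, Real.log (a + ((k : ℝ) + 1)) = Real.log (a + k + 1) := by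
    intro k; ring_nf
  push_cast at h h2
  simp only [e] at h
  simp only [add_zero] at h
  linarith [h, h2]

lemma grb_gamma_prod (b : ℝ) (hb : 0 < b) (n : ℕ) :
    Real.Gamma (b + n) = Real.Gamma b * ∏ k ∈ Finset.range n, (b + k) := by
  induction n with
  | zero => simp
  | succ n ih =>
    have h : b + ((n : ℝ) + 1) = (b + n) + 1 := by ring
    push_cast
    rw [h, Real.Gamma_add_one (by positivity), ih, Finset.prod_range_succ]
    ring

lemma grb_log_gamma_ratio (b : ℝ) (hb : 0 < b) (n : ℕ) :
    Real.log (Real.Gamma (b + n) / Real.Gamma b) = ∑ k ∈ Finset.range n, Real.log (b + k) := by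
  have hΓb : (0:ℝ) < Real.Gamma b := Real.Gamma_pos_of_pos hb
  have hΓbn : (0:ℝ) < Real.Gamma (b + n) := Real.Gamma_pos_of_pos (by positivity)
  rw [Real.log_div (ne_of_gt hΓbn) (ne_of_gt hΓb), grb_gamma_prod b hb n,
    Real.log_mul (ne_of_gt hΓb) ?_, Real.log_prod]
  · ring
  · intro k _
    have : (0:ℝ) < b + k := by positivity
    exact ne_of_gt this
  · have : (0:ℝ) < ∏ k ∈ Finset.range n, (b + k) := by
      apply Finset.prod_pos; intro k _; positivity
    exact ne_of_gt this

/-- **Gamma function ratio bound** (Lemma on prior bounds): for any positive integers `x` and `y`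
and any real constant `β > 0`,
`log (Γ(x+β) / Γ(y+β)) ≤ x log x − y log y − (x − y) + β²/(y+β) + (β+2) |log ((y+β)/(x+β))|`. -/
theorem gamma_ratio_bound (x y : ℕ) (hx : 0 < x) (hy : 0 < y) (β : ℝ) (hβ : 0 < β) :
    Real.log (Real.Gamma ((x : ℝ) + β) / Real.Gamma ((y : ℝ) + β)) ≤
      (x : ℝ) * Real.log x - (y : ℝ) * Real.log y - ((x : ℝ) - (y : ℝ)) +
        β ^ 2 / ((y : ℝ) + β) + (β + 2) * |Real.log (((y : ℝ) + β) / ((x : ℝ) + β))| := by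
  set a : ℝ := (x : ℝ) + β with ha_def
  set b : ℝ := (y : ℝ) + β with hb_def
  have hx' : (0:ℝ) < x := by exact_mod_cast hx
  have hy' : (0:ℝ) < y := by exact_mod_cast hy
  have ha : 0 < a := by positivity
  have hb : 0 < b := by positivity
  have hLBA : Real.log (b / a) = Real.log b - Real.log a :=
    Real.log_div (ne_of_gt hb) (ne_of_gt ha)
  have h1 : (x : ℝ) * Real.log a - x * Real.log x ≤ β := by
    have h := grb_log_ub hx' (show (x:ℝ) ≤ a by rw [ha_def]; linarith)
    have h' := mul_le_mul_of_nonneg_left h (le_of_lt hx')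
    have e : (x : ℝ) * ((a - x) / x) = β := by
      rw [ha_def]; field_simp; ring
    nlinarith [h']
  have h2 : β * y / b ≤ (y : ℝ) * Real.log b - y * Real.log y := by
    have h := grb_log_lb hy' (show (y:ℝ) ≤ b by rw [hb_def]; linarith)
    have h' := mul_le_mul_of_nonneg_left h (le_of_lt hy')
    have e : (y : ℝ) * ((b - y) / b) = β * y / b := by
      field_simp [hb_def]; ring
    nlinarith [h']
  have h4 : β - β * y / b = β ^ 2 / b := by
    field_simp [hb_def]; ring
  have habs0 : 0 ≤ |Real.log (b / a)| := abs_nonneg _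
  have hLle : Real.log b - Real.log a ≤ |Real.log (b / a)| := by
    rw [← hLBA]; exact le_abs_self _
  have hnegLle : Real.log a - Real.log b ≤ |Real.log (b / a)| := by
    have e : Real.log a - Real.log b = -(Real.log (b / a)) := by rw [hLBA]; ring
    rw [e]; exact neg_le_abs _
  rcases le_or_gt y x with hxy | hxy
  · -- case y ≤ x
    set n : ℕ := x - y with hn
    have hcast : (x : ℝ) = (y : ℝ) + (n : ℝ) := by
      rw [hn, Nat.cast_sub hxy]; ring
    have hab : a = b + n := by rw [ha_def, hb_def, hcast]; ring
    have eq1 : Real.log (Real.Gamma a / Real.Gamma b) =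
        ∑ k ∈ Finset.range n, Real.log (b + k) := by
      rw [hab]; exact grb_log_gamma_ratio b hb n
    have key := grb_sum_log_le b hb n
    rw [← hab] at key
    rw [eq1]
    -- key : ∑ ≤ a * log a - a - (b * log b - b)
    have expand : a * Real.log a - a - (b * Real.log b - b) =
        (x : ℝ) * Real.log a + β * Real.log a - (y : ℝ) * Real.log b - β * Real.log b
          - ((x:ℝ) - (y:ℝ)) := by
      rw [ha_def, hb_def]; ring
    rw [expand] at key
    have h3 : β * (Real.log a - Real.log b) ≤ β * |Real.log (b / a)| :=
      mul_le_mul_of_nonneg_left hnegLle (le_of_lt hβ)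
    have h5 : β * |Real.log (b / a)| ≤ (β + 2) * |Real.log (b / a)| :=
      mul_le_mul_of_nonneg_right (by linarith) habs0
    nlinarith [h1, h2, h3, h4, h5]
  · -- case x < y
    set n : ℕ := y - x with hn
    have hcast : (y : ℝ) = (x : ℝ) + (n : ℝ) := by
      rw [hn, Nat.cast_sub (le_of_lt hxy)]; ring
    have hab : b = a + n := by rw [ha_def, hb_def, hcast]; ring
    have eq1 : Real.log (Real.Gamma b / Real.Gamma a) =
        ∑ k ∈ Finset.range n, Real.log (a + k) := by
      rw [hab]; exact grb_log_gamma_ratio a ha n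
    have eqneg : Real.log (Real.Gamma a / Real.Gamma b) =
        - ∑ k ∈ Finset.range n, Real.log (a + k) := by
      rw [← eq1]
      have hΓa := Real.Gamma_pos_of_pos ha
      have hΓb := Real.Gamma_pos_of_pos hb
      rw [Real.log_div (ne_of_gt hΓa) (ne_of_gt hΓb),
        Real.log_div (ne_of_gt hΓb) (ne_of_gt hΓa)]
      ring
    have key := grb_le_sum_log a ha n
    rw [grb_sum_shift a n, ← hab] at key
    -- key : b * log b - b - (a * log a - a) ≤ ∑ + log b - log a
    rw [eqneg]
    have expand : b * Real.log b - b - (a * Real.log a - a) =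
        (y : ℝ) * Real.log b + β * Real.log b - (x : ℝ) * Real.log a - β * Real.log a
          - ((y:ℝ) - (x:ℝ)) := by
      rw [ha_def, hb_def]; ring
    rw [expand] at key
    have hALB : Real.log a ≤ Real.log b := by
      apply Real.log_le_log ha
      rw [ha_def, hb_def]
      have : (x:ℝ) ≤ y := by exact_mod_cast le_of_lt hxy
      linarith
    have h3 : β * Real.log a ≤ β * Real.log b :=
      mul_le_mul_of_nonneg_left hALB (le_of_lt hβ)
    have h5 : (1:ℝ) * |Real.log (b / a)| ≤ (β + 2) * |Real.log (b / a)| :=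
      mul_le_mul_of_nonneg_right (by linarith) habs0
    linarith
end

section
/- Summation bounds for log-Gamma ratios: let a > 0 be a real number and m a positive integer, and set b = a + m. Then log(Γ(b)/Γ(a)) = Σ_{j=0}^{m−1} log(a+j), and this quantity satisfies both the upper bound Σ_{j=0}^{m−1} log(a+j) ≤ b·log b − a·log a − (b − a) and the lower bound Σ_{j=0}^{m−1} log(a+j) ≥ b·log b − a·log a − (b − a) − (1/a − 1/b + log(b/a)). -/
lemma step_ineq (x : ℝ) (hx : 0 < x) :
    Real.log x ≤ (x+1)*Real.log (x+1) - x*Real.log x - 1 ∧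
    (x+1)*Real.log (x+1) - x*Real.log x - 1 ≤ Real.log (x+1) := by
  have hx1 : 0 < x + 1 := by linarith
  have hy : (0:ℝ) < (x+1)/x := by positivity
  have hL : Real.log ((x+1)/x) = Real.log (x+1) - Real.log x :=
    Real.log_div (by positivity) (ne_of_gt hx)
  have h2 : Real.log ((x+1)/x) ≤ (x+1)/x - 1 := Real.log_le_sub_one_of_pos hy
  have h1 : Real.log (x/(x+1)) ≤ x/(x+1) - 1 := Real.log_le_sub_one_of_pos (by positivity)
  have hL' : Real.log (x/(x+1)) = Real.log x - Real.log (x+1) :=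
    Real.log_div (ne_of_gt hx) (ne_of_gt hx1)
  rw [hL] at h2
  rw [hL'] at h1
  constructor
  · have : 1/(x+1) ≤ Real.log (x+1) - Real.log x := by
      have : x/(x+1) - 1 = -(1/(x+1)) := by field_simp; ring
      linarith [h1, this.symm ▸ h1]
    have h3 := mul_le_mul_of_nonneg_left this hx1.le
    have h4 : (x+1)*(1/(x+1)) = 1 := by field_simp
    nlinarith [h3, h4]
  · have : Real.log (x+1) - Real.log x ≤ 1/x := by
      have : (x+1)/x - 1 = 1/x := by field_simp; ring
      linarith [this ▸ h2]
    have h3 := mul_le_mul_of_nonneg_left this hx.le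
    have h4 : x*(1/x) = 1 := by field_simp
    nlinarith [h3, h4]

lemma gamma_prod (a : ℝ) (ha : 0 < a) (m : ℕ) :
    Real.Gamma (a + m) = (∏ j ∈ Finset.range m, (a + j)) * Real.Gamma a := by
  induction m with
  | zero => simp
  | succ n ih =>
      have h : a + (n+1 : ℕ) = (a + n) + 1 := by push_cast; ring
      have hne : a + (n:ℝ) ≠ 0 := by positivity
      rw [h, Real.Gamma_add_one hne, ih, Finset.prod_range_succ]
      ring

/-- **Summation bounds for log-Gamma ratios**: for a real `a > 0` and a positive integer `m`,
with `b = a + m`, one has `log (Γ(b)/Γ(a)) = Σ_{j=0}^{m−1} log (a+j)`, and this sum satisfies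
`b log b − a log a − (b−a) − (1/a − 1/b + log(b/a)) ≤ Σ_{j<m} log (a+j) ≤ b log b − a log a − (b−a)`. -/
theorem log_gamma_ratio_sum_bounds (a : ℝ) (ha : 0 < a) (m : ℕ) (hm : 0 < m)
    (b : ℝ) (hb : b = a + m) :
    Real.log (Real.Gamma b / Real.Gamma a) = ∑ j ∈ Finset.range m, Real.log (a + j) ∧
    (∑ j ∈ Finset.range m, Real.log (a + j)) ≤ b * Real.log b - a * Real.log a - (b - a) ∧
    b * Real.log b - a * Real.log a - (b - a) - (1 / a - 1 / b + Real.log (b / a)) ≤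
      ∑ j ∈ Finset.range m, Real.log (a + j) := by
  have hpos : ∀ j : ℕ, (0:ℝ) < a + j := fun j => by positivity
  have hb2 : b - a = m := by rw [hb]; ring
  have hbpos : 0 < b := by rw [hb]; positivity
  -- telescoping identity
  have tele : ∑ j ∈ Finset.range m,
      ((a + j + 1) * Real.log (a + j + 1) - (a + j) * Real.log (a + j) - 1)
      = b * Real.log b - a * Real.log a - (b - a) := by
    have := Finset.sum_range_sub (fun j : ℕ => (a + j) * Real.log (a + j)) m
    have e : ∀ j ∈ Finset.range m,
        (a + j + 1) * Real.log (a + j + 1) - (a + j) * Real.log (a + j) - 1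
        = ((a + (j+1:ℕ)) * Real.log (a + (j+1:ℕ)) - (a + j) * Real.log (a + j)) - 1 := by
      intro j _; push_cast; ring
    rw [Finset.sum_congr rfl e, Finset.sum_sub_distrib, this]
    simp only [Finset.sum_const, Finset.card_range, nsmul_eq_mul, mul_one,
      Nat.cast_zero, add_zero]
    rw [hb]; ring
  refine ⟨?_, ?_, ?_⟩
  · -- log gamma ratio
    rw [hb, gamma_prod a ha m]
    have hga : Real.Gamma a ≠ 0 := ne_of_gt (Real.Gamma_pos_of_pos ha)
    rw [mul_div_assoc, div_self hga, mul_one]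
    exact Real.log_prod (fun j _ => ne_of_gt (hpos j))
  · rw [← tele]
    exact Finset.sum_le_sum fun j _ => (step_ineq (a + j) (hpos j)).1
  · have upper : ∑ j ∈ Finset.range m,
        ((a + j + 1) * Real.log (a + j + 1) - (a + j) * Real.log (a + j) - 1)
        ≤ ∑ j ∈ Finset.range m, Real.log (a + j + 1) :=
      Finset.sum_le_sum fun j _ => (step_ineq (a + j) (hpos j)).2
    have shift : ∑ j ∈ Finset.range m, Real.log (a + j + 1)
        = ∑ j ∈ Finset.range m, Real.log (a + j) + (Real.log b - Real.log a) := by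
      have e : ∀ j ∈ Finset.range m, Real.log (a + j + 1) = Real.log (a + (j+1:ℕ)) := by
        intro j _; push_cast; ring_nf
      rw [Finset.sum_congr rfl e]
      have h5 := Finset.sum_range_succ' (fun j : ℕ => Real.log (a + j)) m
      have h6 := Finset.sum_range_succ (fun j : ℕ => Real.log (a + j)) m
      simp only [Nat.cast_zero, add_zero] at h5
      rw [hb]
      linarith [h5, h6]
    have hlogdiv : Real.log (b / a) = Real.log b - Real.log a :=
      Real.log_div (ne_of_gt hbpos) (ne_of_gt ha)
    have hinv : 0 ≤ 1/a - 1/b := by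
      have hab : a ≤ b := by rw [hb]; have : (0:ℝ) ≤ m := Nat.cast_nonneg m; linarith
      have : 1/b ≤ 1/a := one_div_le_one_div_of_le ha hab
      linarith
    rw [hlogdiv]
    rw [← tele] at *
    linarith [upper, shift]
end

section
/- Quadratic lower bound for Bernoulli Kullback–Leibler divergence: for any real p ∈ (0,1) and any x, y ∈ (0, p], one has D(x‖y) ≥ (x − y)²/(2p), where D(x‖y) = x·log(x/y) + (1−x)·log((1−x)/(1−y)) is the Kullback–Leibler divergence between Bernoulli(x) and Bernoulli(y). -/
/-- **Quadratic lower bound for the Bernoulli Kullback–Leibler divergence**: for `p ∈ (0,1)` and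
`x, y ∈ (0, p]`, `D(x‖y) = x log(x/y) + (1−x) log((1−x)/(1−y)) ≥ (x−y)²/(2p)`. -/
theorem bernoulli_kl_quadratic_lower_bound (p x y : ℝ)
    (hp : p ∈ Set.Ioo (0 : ℝ) 1) (hx : x ∈ Set.Ioc (0 : ℝ) p) (hy : y ∈ Set.Ioc (0 : ℝ) p) :
    (x - y) ^ 2 / (2 * p) ≤
      x * Real.log (x / y) + (1 - x) * Real.log ((1 - x) / (1 - y)) := by
  obtain ⟨hp0, hp1⟩ := hp
  obtain ⟨hx0, hxp⟩ := hx
  obtain ⟨hy0, hyp⟩ := hy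
  have hx1 : x < 1 := lt_of_le_of_lt hxp hp1
  have hy1 : y < 1 := lt_of_le_of_lt hyp hp1
  set L : ℝ → ℝ := fun t =>
    x * Real.log x - x * Real.log t +
      ((1 - x) * Real.log (1 - x) - (1 - x) * Real.log (1 - t)) - (x - t) ^ 2 / (2 * p)
    with hLdef
  have key : ∀ t ∈ Set.Ioo (0 : ℝ) 1,
      HasDerivAt L ((t - x) * (1 / (t * (1 - t)) - 1 / p)) t := by
    intro t ht
    have ht0 : t ≠ 0 := ht.1.ne'
    have ht1 : (1 : ℝ) - t ≠ 0 := by linarith [ht.2]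
    have hA : HasDerivAt (fun t : ℝ => x * Real.log x - x * Real.log t) (-(x * t⁻¹)) t :=
      ((Real.hasDerivAt_log ht0).const_mul x).const_sub _
    have hlog1t : HasDerivAt (fun t : ℝ => Real.log (1 - t)) ((1 - t)⁻¹ * (-1)) t :=
      (Real.hasDerivAt_log ht1).comp t ((hasDerivAt_id t).const_sub 1)
    have hB : HasDerivAt
        (fun t : ℝ => (1 - x) * Real.log (1 - x) - (1 - x) * Real.log (1 - t))
        (-((1 - x) * ((1 - t)⁻¹ * (-1)))) t :=
      (hlog1t.const_mul (1 - x)).const_sub _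
    have hC : HasDerivAt (fun t : ℝ => (x - t) ^ 2 / (2 * p))
        ((2 : ℕ) * (x - t) ^ 1 * (-1) / (2 * p)) t :=
      (((hasDerivAt_id t).const_sub x).pow 2).div_const _
    have := (hA.add hB).sub hC
    refine this.congr_deriv ?_
    have hp0' : p ≠ 0 := hp0.ne'
    field_simp
    ring
  have hcont : ∀ s : Set ℝ, s ⊆ Set.Ioo (0 : ℝ) 1 → ContinuousOn L s := by
    intro s hs
    exact fun t ht => ((key t (hs ht)).continuousAt).continuousWithinAt
  have hLx : L x = 0 := by simp [hLdef]
  have hgoal : 0 ≤ L y →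
      (x - y) ^ 2 / (2 * p) ≤
        x * Real.log (x / y) + (1 - x) * Real.log ((1 - x) / (1 - y)) := by
    intro h
    rw [Real.log_div hx0.ne' hy0.ne', Real.log_div (by linarith) (by linarith)]
    simp only [hLdef] at h
    nlinarith [h]
  rcases lt_trichotomy y x with hyx | hyx | hyx
  · -- y < x : L antitone on [y, x]
    have hsub : Set.Icc y x ⊆ Set.Ioo (0 : ℝ) 1 := fun t ht =>
      ⟨lt_of_lt_of_le hy0 ht.1, lt_of_le_of_lt ht.2 hx1⟩
    have hanti : AntitoneOn L (Set.Icc y x) := by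
      apply antitoneOn_of_deriv_nonpos (convex_Icc y x) (hcont _ hsub)
      · intro t ht
        rw [interior_Icc] at ht
        exact ((key t (hsub (Set.Ioo_subset_Icc_self ht))).differentiableAt).differentiableWithinAt
      · intro t ht
        rw [interior_Icc] at ht
        have ht' := hsub (Set.Ioo_subset_Icc_self ht)
        rw [(key t ht').deriv]
        have h1 : t * (1 - t) ≤ p := by nlinarith [ht.2, ht'.1, ht'.2]
        have h2 : 0 < t * (1 - t) := mul_pos ht'.1 (by linarith [ht'.2])
        have h3 : 1 / p ≤ 1 / (t * (1 - t)) := one_div_le_one_div_of_le h2 h1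
        have h4 : t - x ≤ 0 := by linarith [ht.2]
        nlinarith
    have := hanti (Set.left_mem_Icc.2 hyx.le) (Set.right_mem_Icc.2 hyx.le) hyx.le
    exact hgoal (by linarith [hLx ▸ this])
  · subst hyx
    have : 0 ≤ L y := le_of_eq hLx.symm
    exact hgoal this
  · -- x < y : L monotone on [x, y]
    have hsub : Set.Icc x y ⊆ Set.Ioo (0 : ℝ) 1 := fun t ht =>
      ⟨lt_of_lt_of_le hx0 ht.1, lt_of_le_of_lt ht.2 hy1⟩
    have hmono : MonotoneOn L (Set.Icc x y) := by
      apply monotoneOn_of_deriv_nonneg (convex_Icc x y) (hcont _ hsub)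
      · intro t ht
        rw [interior_Icc] at ht
        exact ((key t (hsub (Set.Ioo_subset_Icc_self ht))).differentiableAt).differentiableWithinAt
      · intro t ht
        rw [interior_Icc] at ht
        have ht' := hsub (Set.Ioo_subset_Icc_self ht)
        rw [(key t ht').deriv]
        have h1 : t * (1 - t) ≤ p := by nlinarith [ht.2, ht'.1, ht'.2]
        have h2 : 0 < t * (1 - t) := mul_pos ht'.1 (by linarith [ht'.2])
        have h3 : 1 / p ≤ 1 / (t * (1 - t)) := one_div_le_one_div_of_le h2 h1
        have h4 : 0 ≤ t - x := by linarith [ht.1]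
        nlinarith
    have := hmono (Set.left_mem_Icc.2 hyx.le) (Set.right_mem_Icc.2 hyx.le) hyx.le
    exact hgoal (by linarith [hLx ▸ this])
end

section
/- Determinant lower bound for the two-community discrepancy matrix: let α > β ≥ 1 be constants, n > 0, and let n₁, n₂, m, x be real numbers satisfying n₁ + n₂ = n, βn/2 ≥ n₁ ≥ n/2 ≥ n₂ ≥ n/(2β), −m/2 ≤ x ≤ m/2, 0 ≤ m ≤ n/(2β), n₁ + 2x ≤ αn/2, and n₂ − 2x ≥ n/(2α). Then the 2×2 matrix R with entries R₁₁ = n₁ − (m/2 − x), R₁₂ = m/2 + x, R₂₁ = m/2 − x, R₂₂ = n₂ − (m/2 + x) satisfies det(R) = n₁n₂ − (m/2)n − x(n₁ − n₂) ≥ n(n − 2m)/(4α). -/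
/-- **Determinant lower bound for the two-community discrepancy matrix**: under the stated size
constraints, the 2×2 discrepancy matrix `R` satisfies
`det R = n₁ n₂ − (m/2) n − x (n₁ − n₂) ≥ n (n − 2m) / (4α)`. -/
theorem discrepancy_det_lower_bound (α β n n₁ n₂ m x : ℝ)
    (hβ : 1 ≤ β) (hαβ : β < α) (hn : 0 < n)
    (hsum : n₁ + n₂ = n)
    (hn1u : n₁ ≤ β * n / 2) (hn1l : n / 2 ≤ n₁)
    (hn2u : n₂ ≤ n / 2) (hn2l : n / (2 * β) ≤ n₂)
    (hx1 : -(m / 2) ≤ x) (hx2 : x ≤ m / 2)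
    (hm0 : 0 ≤ m) (hm : m ≤ n / (2 * β))
    (hS1 : n₁ + 2 * x ≤ α * n / 2) (hS2 : n / (2 * α) ≤ n₂ - 2 * x) :
    (Matrix.det !![n₁ - (m / 2 - x), m / 2 + x; m / 2 - x, n₂ - (m / 2 + x)] =
        n₁ * n₂ - m / 2 * n - x * (n₁ - n₂)) ∧
      n * (n - 2 * m) / (4 * α) ≤ n₁ * n₂ - m / 2 * n - x * (n₁ - n₂) := by
  have hα1 : (1 : ℝ) < α := lt_of_le_of_lt hβ hαβ
  have hα0 : (0 : ℝ) < α := lt_trans one_pos hα1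
  have hβ0 : (0 : ℝ) < β := lt_of_lt_of_le one_pos hβ
  constructor
  · rw [Matrix.det_fin_two]
    simp
    linear_combination (-(m / 2)) * hsum
  · have hmn2 : m ≤ n₂ := le_trans hm hn2l
    have hn12 : n₂ ≤ n₁ := le_trans hn2u hn1l
    have hS2' : n ≤ 2 * α * (n₂ - 2 * x) := by
      have := (div_le_iff₀ (by positivity : (0:ℝ) < 2 * α)).mp hS2
      linarith [this]
    have h1 : 0 ≤ 2 * (n₂ - m) * (α * n - n) := by
      apply mul_nonneg
      · linarith
      · nlinarith
    have h2 : 0 ≤ (n₁ - n₂) * (2 * α * (n₂ - 2 * x) - n) := by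
      apply mul_nonneg <;> linarith
    have key : n * (n - 2 * m) + (2 * (n₂ - m) * (α * n - n)
        + (n₁ - n₂) * (2 * α * (n₂ - 2 * x) - n))
        = (n₁ * n₂ - m / 2 * n - x * (n₁ - n₂)) * (4 * α) := by
      linear_combination (-(2 * α * n₂ + n)) * hsum
    rw [div_le_iff₀ (by positivity : (0:ℝ) < 4 * α)]
    linarith [h1, h2, key]
end

section
/- Bias of the plug-in connectivity estimates: let Z, Z* ∈ [K]^n with discrepancy matrix R(a,b) = #{i : Z_i = a, Z*_i = b}, row sums n'_a = Σ_b R(a,b) ≥ 2, and let B be the K×K matrix with B_{kk} = p and B_{kl} = q for k ≠ l, 0 < q < p < 1. Define B̃_{aa} = ((RBRᵀ)_{aa} − Σ_k B_{kk}R_{ak})/(n'_a(n'_a − 1)) and B̃_{ab} = (RBRᵀ)_{ab}/(n'_a·n'_b) for a ≠ b. Then (p − B̃_{aa})/(p−q) = Σ_{k≠l} R_{ak}R_{al}/(n'_a(n'_a−1)) and (B̃_{ab} − q)/(p−q) = Σ_k R_{ak}R_{bk}/(n'_a·n'_b). Moreover, if every n'_a ≥ n/(Kα) for a constant α ≥ 1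 and m = n − Σ_a R_{aa}, then max_{a,b} |B̃_{ab} − B_{ab}| ≤ (2Kαm/n)·(p−q). -/
open Finset

set_option maxHeartbeats 1000000

/-- Discrepancy matrix `R(a,b) = #{i : Z i = a, Z* i = b}` (as a real matrix). -/
noncomputable def discMat (n K : ℕ) (Z Zstar : Fin n → Fin K) :
    Matrix (Fin K) (Fin K) ℝ :=
  Matrix.of fun a b => ((Finset.univ.filter fun i => Z i = a ∧ Zstar i = b).card : ℝ)

/-- **Bias of the plug-in connectivity estimates**: with discrepancy matrix `R`, row sums
`n'_a ≥ 2`, and `B` the homogeneous connectivity matrix, the plug-in means `B̃` satisfy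
`(p − B̃_{aa})/(p−q) = Σ_{k≠l} R_{ak}R_{al}/(n'_a(n'_a−1))`,
`(B̃_{ab} − q)/(p−q) = Σ_k R_{ak}R_{bk}/(n'_a n'_b)` for `a ≠ b`, and if every `n'_a ≥ n/(Kα)`
with `α ≥ 1` and `m = n − Σ_a R_{aa}`, then `max_{a,b} |B̃_{ab} − B_{ab}| ≤ (2Kαm/n)(p−q)`. -/
theorem plugin_connectivity_bias (n K : ℕ) (hK : 0 < K)
    (Z Zstar : Fin n → Fin K) (p q : ℝ) (hq : 0 < q) (hqp : q < p) (hp : p < 1)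
    (R : Matrix (Fin K) (Fin K) ℝ) (hR : R = discMat n K Z Zstar)
    (n' : Fin K → ℝ) (hn' : ∀ a, n' a = ∑ b, R a b) (hn2 : ∀ a, 2 ≤ n' a)
    (B : Matrix (Fin K) (Fin K) ℝ) (hB : ∀ a b, B a b = if a = b then p else q)
    (Btil : Matrix (Fin K) (Fin K) ℝ)
    (hBtil : ∀ a b, Btil a b =
      if a = b then
        ((R * B * R.transpose) a a - ∑ k, B k k * R a k) / (n' a * (n' a - 1))
      else (R * B * R.transpose) a b / (n' a * n' b)) :
    (∀ a, (p - Btil a a) / (p - q) =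
        (∑ k, ∑ l, if k ≠ l then R a k * R a l else 0) / (n' a * (n' a - 1))) ∧
    (∀ a b, a ≠ b →
        (Btil a b - q) / (p - q) = (∑ k, R a k * R b k) / (n' a * n' b)) ∧
    (∀ α : ℝ, 1 ≤ α → (∀ a, (n : ℝ) / (K * α) ≤ n' a) →
      ∀ m : ℝ, m = (n : ℝ) - ∑ a, R a a →
        ∀ a b, |Btil a b - B a b| ≤ 2 * K * α * m / n * (p - q)) := by

  have hpq : (0:ℝ) < p - q := by linarith
  have hpq' : p - q ≠ 0 := ne_of_gt hpq
  have hRnn : ∀ a b, 0 ≤ R a b := by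
    intro a b; rw [hR]; exact Nat.cast_nonneg _
  have hRnat : ∀ a b, ∃ c : ℕ, R a b = (c:ℝ) := by
    intro a b; rw [hR]; exact ⟨_, rfl⟩
  have hn'pos : ∀ a, (0:ℝ) < n' a := fun a => lt_of_lt_of_le (by norm_num) (hn2 a)
  have hn'ne : ∀ a, n' a ≠ 0 := fun a => ne_of_gt (hn'pos a)
  have hn1 : ∀ a, (0:ℝ) < n' a - 1 := fun a => by have := hn2 a; linarith
  have hdenpos : ∀ a, (0:ℝ) < n' a * (n' a - 1) := fun a => mul_pos (hn'pos a) (hn1 a)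
  have hden : ∀ a, n' a * (n' a - 1) ≠ 0 := fun a => ne_of_gt (hdenpos a)
  -- sum of all entries of R equals n
  have hRsumN : ∑ a, ∑ b, R a b = (n : ℝ) := by
    rw [hR]
    have hcf : ∀ a b : Fin K, ((Finset.univ.filter fun i => Z i = a ∧ Zstar i = b).card : ℝ)
        = ∑ i : Fin n, if Z i = a ∧ Zstar i = b then (1:ℝ) else 0 := by
      intro a b
      rw [Finset.natCast_card_filter]
    calc ∑ a, ∑ b, discMat n K Z Zstar a b
        = ∑ a, ∑ b, ∑ i : Fin n, if Z i = a ∧ Zstar i = b then (1:ℝ) else 0 := by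
          refine Finset.sum_congr rfl fun a _ => Finset.sum_congr rfl fun b _ => hcf a b
      _ = ∑ a : Fin K, ∑ i : Fin n, ∑ b, if Z i = a ∧ Zstar i = b then (1:ℝ) else 0 :=
          Finset.sum_congr rfl fun a _ => Finset.sum_comm
      _ = ∑ i : Fin n, ∑ a, ∑ b, if Z i = a ∧ Zstar i = b then (1:ℝ) else 0 :=
          Finset.sum_comm
      _ = ∑ i : Fin n, (1:ℝ) := by
          refine Finset.sum_congr rfl fun i _ => ?_
          simp [ite_and, Finset.sum_ite_eq]
      _ = (n:ℝ) := by simp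
  -- key matrix identity
  have hBsum : ∀ a l, (∑ k, R a k * B k l) = n' a * q + R a l * (p - q) := by
    intro a l
    have h1 : ∀ k : Fin K, R a k * B k l
        = R a k * q + (if k = l then R a k * (p - q) else 0) := by
      intro k; rw [hB]; split_ifs <;> ring
    rw [Finset.sum_congr rfl fun k _ => h1 k, Finset.sum_add_distrib,
      Finset.sum_ite_eq' Finset.univ l (fun k => R a k * (p - q)), ← Finset.sum_mul, ← hn' a]
    simp
  have key : ∀ a b, (R * B * R.transpose) a b
      = q * (n' a * n' b) + (p - q) * ∑ k, R a k * R b k := by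
    intro a b
    simp only [Matrix.mul_apply, Matrix.transpose_apply]
    calc ∑ l, (∑ k, R a k * B k l) * R b l
        = ∑ l, (n' a * q * R b l + (p - q) * (R a l * R b l)) := by
          refine Finset.sum_congr rfl fun l _ => ?_
          rw [hBsum a l]; ring
      _ = n' a * q * (∑ l, R b l) + (p - q) * ∑ l, R a l * R b l := by
          rw [Finset.sum_add_distrib, ← Finset.mul_sum, ← Finset.mul_sum]
      _ = q * (n' a * n' b) + (p - q) * ∑ k, R a k * R b k := by
          rw [← hn' b]; ring
  have hdiagsum : ∀ a, (∑ k, B k k * R a k) = p * n' a := by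
    intro a
    have h1 : ∀ k : Fin K, B k k * R a k = p * R a k := by
      intro k; rw [hB]; simp
    rw [Finset.sum_congr rfl fun k _ => h1 k, ← Finset.mul_sum, ← hn' a]
  have hsumite : ∀ a, (∑ k, ∑ l, if k ≠ l then R a k * R a l else 0)
      = n' a * n' a - ∑ k, R a k * R a k := by
    intro a
    have h1 : ∀ k : Fin K, (∑ l, if k ≠ l then R a k * R a l else 0)
        = R a k * n' a - R a k * R a k := by
      intro k
      have h2 : ∀ l : Fin K, (if k ≠ l then R a k * R a l else 0)
          = R a k * R a l - (if k = l then R a k * R a l else 0) := by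
        intro l; by_cases h : k = l <;> simp [h]
      rw [Finset.sum_congr rfl fun l _ => h2 l, Finset.sum_sub_distrib,
        Finset.sum_ite_eq Finset.univ k (fun l => R a k * R a l), ← Finset.mul_sum, ← hn' a]
      simp
    rw [Finset.sum_congr rfl fun k _ => h1 k, Finset.sum_sub_distrib, ← Finset.sum_mul, ← hn' a]
  -- Part 1
  have part1 : ∀ a, (p - Btil a a) / (p - q) =
      (∑ k, ∑ l, if k ≠ l then R a k * R a l else 0) / (n' a * (n' a - 1)) := by
    intro a
    rw [hBtil a a, if_pos rfl, key a a, hdiagsum a, hsumite a]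
    set S := ∑ k, R a k * R a k with hS
    have hd := hden a
    have hne := hn'ne a
    have h1 := hn1 a
    field_simp
    ring
  have part2 : ∀ a b, a ≠ b →
      (Btil a b - q) / (p - q) = (∑ k, R a k * R b k) / (n' a * n' b) := by
    intro a b hab
    rw [hBtil a b, if_neg hab, key a b]
    set T := ∑ k, R a k * R b k with hT
    have hnea := hn'ne a
    have hneb := hn'ne b
    field_simp
    ring
  refine ⟨part1, part2, ?_⟩
  intro α hα hlow m hm a b
  have hK1 : (1:ℝ) ≤ (K:ℝ) := by exact_mod_cast hK
  have hKα : (0:ℝ) < (K:ℝ) * α := by nlinarith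
  have hnsum : (n:ℝ) = ∑ c, n' c := by
    rw [← hRsumN]
    exact Finset.sum_congr rfl fun c _ => (hn' c).symm
  have hnpos : (0:ℝ) < n := by
    rw [hnsum]
    calc (0:ℝ) < ∑ _c : Fin K, (2:ℝ) := by
          rw [Finset.sum_const, Finset.card_univ, Fintype.card_fin]
          positivity
      _ ≤ ∑ c, n' c := Finset.sum_le_sum fun c _ => hn2 c
  obtain ⟨mf, hmf⟩ : ∃ f : Fin K → ℝ, ∀ c, f c = n' c - R c c :=
    ⟨fun c => n' c - R c c, fun c => rfl⟩
  have hmfnn : ∀ c, 0 ≤ mf c := by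
    intro c
    have h1 : R c c ≤ ∑ b, R c b :=
      Finset.single_le_sum (fun b _ => hRnn c b) (Finset.mem_univ c)
    rw [hmf c, hn' c]
    linarith
  have hmferase : ∀ c, mf c = ∑ k ∈ Finset.univ.erase c, R c k := by
    intro c
    have h1 : R c c + ∑ k ∈ Finset.univ.erase c, R c k = ∑ k, R c k :=
      Finset.add_sum_erase Finset.univ (fun k => R c k) (Finset.mem_univ c)
    rw [hmf c, hn' c]
    linarith
  have hmsum : m = ∑ c, mf c := by
    rw [hm, hnsum, ← Finset.sum_sub_distrib]
    exact Finset.sum_congr rfl fun c _ => (hmf c).symm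
  have hmnn : 0 ≤ m := by
    rw [hmsum]; exact Finset.sum_nonneg fun c _ => hmfnn c
  have hmle : ∀ c, mf c ≤ m := by
    intro c; rw [hmsum]
    exact Finset.single_le_sum (fun d _ => hmfnn d) (Finset.mem_univ c)
  have hinv : ∀ c, (n' c)⁻¹ ≤ (K:ℝ) * α / n := by
    intro c
    have h0 : (0:ℝ) < (n:ℝ) / ((K:ℝ) * α) := div_pos hnpos hKα
    have h1 := one_div_le_one_div_of_le h0 (hlow c)
    rw [one_div_div] at h1
    rw [inv_eq_one_div]
    exact h1
  have hKαn : (0:ℝ) ≤ (K:ℝ) * α / n := le_of_lt (div_pos hKα hnpos)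
  have hRle : ∀ c k, R c k ≤ n' c := by
    intro c k
    rw [hn' c]
    exact Finset.single_le_sum (fun d _ => hRnn c d) (Finset.mem_univ k)
  rcases eq_or_ne a b with rfl | hab
  · -- diagonal case
    rw [hB a a, if_pos rfl]
    set D := ∑ k, ∑ l, if k ≠ l then R a k * R a l else 0 with hD
    have hD0 : 0 ≤ D := by
      refine Finset.sum_nonneg fun k _ => Finset.sum_nonneg fun l _ => ?_
      split_ifs
      · exact mul_nonneg (hRnn a k) (hRnn a l)
      · exact le_rfl
    have hdiff : p - Btil a a = D / (n' a * (n' a - 1)) * (p - q) :=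
      (div_eq_iff hpq').mp (part1 a)
    have habs : |Btil a a - p| = D / (n' a * (n' a - 1)) * (p - q) := by
      rw [abs_sub_comm, hdiff]
      exact abs_of_nonneg (mul_nonneg (div_nonneg hD0 (hdenpos a).le) hpq.le)
    rw [habs]
    -- bound D
    have ht' : ∃ c : ℕ, (∑ k ∈ Finset.univ.erase a, R a k) = (c:ℝ) := by
      refine ⟨∑ k ∈ Finset.univ.erase a, (Finset.univ.filter
        fun i => Z i = a ∧ Zstar i = k).card, ?_⟩
      rw [hR]
      push_cast
      rfl
    have hsq : ∀ c k, R c k ≤ R c k * R c k := by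
      intro c k
      obtain ⟨x, hx⟩ := hRnat c k
      rcases Nat.eq_zero_or_pos x with h0 | h1
      · rw [hx, h0]; norm_num
      · have : (1:ℝ) ≤ (x:ℝ) := by exact_mod_cast h1
        nlinarith
    have hDle : D ≤ 2 * mf a * (n' a - 1) := by
      rw [hD, hsumite a]
      have hsplit : n' a = R a a + ∑ k ∈ Finset.univ.erase a, R a k := by
        rw [hn' a, ← Finset.add_sum_erase Finset.univ (fun k => R a k) (Finset.mem_univ a)]
      have hSsplit : (∑ k, R a k * R a k)
          = R a a * R a a + ∑ k ∈ Finset.univ.erase a, R a k * R a k :=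
        (Finset.add_sum_erase Finset.univ (fun k => R a k * R a k) (Finset.mem_univ a)).symm
      have hmfa : mf a = ∑ k ∈ Finset.univ.erase a, R a k := hmferase a
      have hle : (∑ k ∈ Finset.univ.erase a, R a k)
          ≤ ∑ k ∈ Finset.univ.erase a, R a k * R a k :=
        Finset.sum_le_sum fun k _ => hsq a k
      have hsnn : (0:ℝ) ≤ ∑ k ∈ Finset.univ.erase a, R a k * R a k :=
        Finset.sum_nonneg fun k _ => mul_nonneg (hRnn a k) (hRnn a k)
      obtain ⟨c, hc⟩ := ht'
      rcases Nat.eq_zero_or_pos c with h0 | h1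
      · have hz : (∑ k ∈ Finset.univ.erase a, R a k) = 0 := by rw [hc, h0]; norm_num
        have hmfa0 : mf a = 0 := by rw [hmfa, hz]
        have hn'eq : n' a = R a a := by rw [hsplit, hz, add_zero]
        rw [hmfa0, hn'eq, hSsplit]
        nlinarith [hsnn]
      · have h1' : (1:ℝ) ≤ (c:ℝ) := by exact_mod_cast h1
        nlinarith [hRnn a a]
    have hstep1 : D / (n' a * (n' a - 1)) ≤ 2 * mf a / n' a := by
      rw [div_le_div_iff₀ (hdenpos a) (hn'pos a)]
      calc D * n' a ≤ (2 * mf a * (n' a - 1)) * n' a :=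
            mul_le_mul_of_nonneg_right hDle (hn'pos a).le
        _ = 2 * mf a * (n' a * (n' a - 1)) := by ring
    have hstep2 : 2 * mf a / n' a ≤ 2 * K * α * m / n := by
      calc 2 * mf a / n' a = 2 * mf a * (n' a)⁻¹ := by rw [div_eq_mul_inv]
        _ ≤ 2 * mf a * ((K:ℝ) * α / n) :=
            mul_le_mul_of_nonneg_left (hinv a) (by linarith [hmfnn a])
        _ ≤ 2 * m * ((K:ℝ) * α / n) :=
            mul_le_mul_of_nonneg_right (by linarith [hmle a]) hKαn
        _ = 2 * K * α * m / n := by ring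
    exact mul_le_mul_of_nonneg_right (hstep1.trans hstep2) hpq.le
  · -- off-diagonal case
    rw [hB a b, if_neg hab]
    obtain ⟨T, hTdef⟩ : ∃ t : ℝ, t = ∑ k, R a k * R b k := ⟨_, rfl⟩
    have hT0 : 0 ≤ T := by
      rw [hTdef]
      exact Finset.sum_nonneg fun k _ => mul_nonneg (hRnn a k) (hRnn b k)
    have hprodpos : (0:ℝ) < n' a * n' b := mul_pos (hn'pos a) (hn'pos b)
    have hdiff : Btil a b - q = T / (n' a * n' b) * (p - q) := by
      have h := part2 a b hab
      rw [← hTdef] at h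
      exact (div_eq_iff hpq').mp h
    have habs : |Btil a b - q| = T / (n' a * n' b) * (p - q) := by
      rw [hdiff]
      exact abs_of_nonneg (mul_nonneg (div_nonneg hT0 hprodpos.le) hpq.le)
    rw [habs]
    have hmab : mf a + mf b ≤ m := by
      rw [hmsum]
      have h := Finset.sum_le_sum_of_subset_of_nonneg
        (Finset.subset_univ ({a, b} : Finset (Fin K))) (fun c _ _ => hmfnn c)
      rwa [Finset.sum_pair hab] at h
    have hTle : T ≤ n' a * mf b + mf a * n' b := by
      have hsplitT : T = R a a * R b a + ∑ k ∈ Finset.univ.erase a, R a k * R b k := by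
        rw [hTdef]
        exact (Finset.add_sum_erase Finset.univ (fun k => R a k * R b k) (Finset.mem_univ a)).symm
      have h1 : R b a ≤ mf b := by
        rw [hmferase b]
        exact Finset.single_le_sum (fun d _ => hRnn b d)
          (Finset.mem_erase.mpr ⟨hab, Finset.mem_univ a⟩)
      have h2 : R a a * R b a ≤ n' a * mf b :=
        mul_le_mul (hRle a a) h1 (hRnn b a) (hn'pos a).le
      have h3 : (∑ k ∈ Finset.univ.erase a, R a k * R b k)
          ≤ ∑ k ∈ Finset.univ.erase a, R a k * n' b :=
        Finset.sum_le_sum fun k _ => mul_le_mul_of_nonneg_left (hRle b k) (hRnn a k)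
      have h4 : (∑ k ∈ Finset.univ.erase a, R a k * n' b) = mf a * n' b := by
        rw [← Finset.sum_mul, ← hmferase a]
      rw [hsplitT]
      rw [h4] at h3
      linarith
    have hstep1 : T / (n' a * n' b) ≤ mf b * (n' b)⁻¹ + mf a * (n' a)⁻¹ := by
      have heq : (n' a * mf b + mf a * n' b) / (n' a * n' b)
          = mf b * (n' b)⁻¹ + mf a * (n' a)⁻¹ := by
        field_simp [hn'ne a, hn'ne b]
      rw [← heq]
      gcongr
    have hstep2 : mf b * (n' b)⁻¹ + mf a * (n' a)⁻¹ ≤ 2 * K * α * m / n := by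
      have h1 : mf b * (n' b)⁻¹ ≤ mf b * ((K:ℝ) * α / n) :=
        mul_le_mul_of_nonneg_left (hinv b) (hmfnn b)
      have h2 : mf a * (n' a)⁻¹ ≤ mf a * ((K:ℝ) * α / n) :=
        mul_le_mul_of_nonneg_left (hinv a) (hmfnn a)
      have h3 : mf b * ((K:ℝ) * α / n) + mf a * ((K:ℝ) * α / n)
          ≤ m * ((K:ℝ) * α / n) := by
        have := mul_le_mul_of_nonneg_right hmab hKαn
        nlinarith
      have h4 : m * ((K:ℝ) * α / n) ≤ 2 * K * α * m / n := by
        have h5 : (0:ℝ) ≤ m * ((K:ℝ) * α / n) := mul_nonneg hmnn hKαn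
        have h6 : 2 * (K:ℝ) * α * m / n = 2 * (m * ((K:ℝ) * α / n)) := by ring
        rw [h6]
        linarith
      linarith
    exact mul_le_mul_of_nonneg_right (hstep1.trans hstep2) hpq.le
end

section
/- Size of the set of improving neighbors: let α > β ≥ 1 be constants, let Z* ∈ [K]^n have all community sizes in [n/(βK), βn/K], let S_α = {Z ∈ [K]^n : all community sizes of Z in [n/(αK), αn/K]}, and let Z ∈ S_α with m = d(Z, Z*) ≥ 1, where d(Z,Z*) = min_{σ∈P_K} H(σ∘Z, Z*) is the number of misclassified nodes. Define B(Z) = {Z' : H(Z, Z') = 1 and d(Z', Z*) = d(Z, Z*) − 1}. Then |S_α ∩ B(Z)| ≥ min{ n/(βK) − n/(αK) − 1, (α−β)n/K − 1, m }. -/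
open Finset

/-- Hamming distance between label assignments. -/
def hammD (n K : ℕ) (Z Z' : Fin n → Fin K) : ℕ :=
  (Finset.univ.filter fun i => Z i ≠ Z' i).card

/-- Number of misclassified nodes: `d(Z,Z*) = min_{σ ∈ P_K} H(σ∘Z, Z*)`. -/
def dMis (n K : ℕ) (Z Zstar : Fin n → Fin K) : ℕ :=
  Finset.univ.inf' ⟨1, Finset.mem_univ 1⟩
    (fun σ : Equiv.Perm (Fin K) => hammD n K (σ ∘ Z) Zstar)

/-- Community size of `Z` at label `a`. -/
def commSize (n K : ℕ) (Z : Fin n → Fin K) (a : Fin K) : ℕ :=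
  (Finset.univ.filter fun i => Z i = a).card

lemma hammD_triangle {n K : ℕ} (X Y W : Fin n → Fin K) :
    hammD n K X W ≤ hammD n K X Y + hammD n K Y W := by
  classical
  refine le_trans (Finset.card_le_card ?_) (Finset.card_union_le _ _)
  intro i hi
  simp only [hammD, mem_filter, mem_union, mem_univ, true_and] at *
  by_contra hc
  push_neg at hc
  exact hi (hc.1.trans hc.2)

lemma hammD_comp {n K : ℕ} (τ : Equiv.Perm (Fin K)) (X Y : Fin n → Fin K) :
    hammD n K (τ ∘ X) (τ ∘ Y) = hammD n K X Y := by
  simp [hammD, Function.comp]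

lemma dMis_le {n K : ℕ} (Z Zstar : Fin n → Fin K) (τ : Equiv.Perm (Fin K)) :
    dMis n K Z Zstar ≤ hammD n K (τ ∘ Z) Zstar :=
  Finset.inf'_le _ (mem_univ τ)

section flip
variable {n K : ℕ} (σ : Equiv.Perm (Fin K)) (Z Zstar : Fin n → Fin K) (i : Fin n)

lemma flip_ne (hi : σ (Z i) ≠ Zstar i) : Z i ≠ σ.symm (Zstar i) := by
  intro h; exact hi (by rw [h]; simp)

lemma hammD_flip (hi : σ (Z i) ≠ Zstar i) : hammD n K Z (Function.update Z i (σ.symm (Zstar i))) = 1 := by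
  classical
  have : (Finset.univ.filter fun j => Z j ≠ Function.update Z i (σ.symm (Zstar i)) j) = {i} := by
    ext j
    simp only [mem_filter, mem_univ, true_and, mem_singleton]
    constructor
    · intro hj
      by_contra hne
      exact hj (by rw [Function.update_of_ne hne])
    · intro hj
      subst hj
      rw [Function.update_self]
      exact flip_ne σ Z Zstar j hi
  rw [hammD, this, card_singleton]

lemma hammD_flip_opt (hi : σ (Z i) ≠ Zstar i) :
    hammD n K (σ ∘ Function.update Z i (σ.symm (Zstar i))) Zstar + 1
      = hammD n K (σ ∘ Z) Zstar := by
  classical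
  have hset : (Finset.univ.filter fun j => (σ ∘ Function.update Z i (σ.symm (Zstar i))) j ≠ Zstar j)
      = (Finset.univ.filter fun j => (σ ∘ Z) j ≠ Zstar j).erase i := by
    ext j
    simp only [mem_filter, mem_univ, true_and, mem_erase, Function.comp]
    rcases eq_or_ne j i with rfl | hne
    · simp [Function.update_self]
    · rw [Function.update_of_ne hne]
      simp [hne]
  rw [hammD, hammD, hset, card_erase_of_mem (by simp [hi]), Nat.sub_add_cancel]
  exact Nat.one_le_iff_ne_zero.mpr (by simp [card_eq_zero, filter_eq_empty_iff]; exact ⟨i, hi⟩)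

lemma dMis_flip (hi : σ (Z i) ≠ Zstar i)
    (hopt : dMis n K Z Zstar = hammD n K (σ ∘ Z) Zstar) :
    dMis n K (Function.update Z i (σ.symm (Zstar i))) Zstar = dMis n K Z Zstar - 1 := by
  classical
  apply le_antisymm
  · have h1 := dMis_le (Function.update Z i (σ.symm (Zstar i))) Zstar σ
    have h2 := hammD_flip_opt σ Z Zstar i hi
    omega
  · apply Finset.le_inf'
    intro τ _
    have h1 : dMis n K Z Zstar ≤ hammD n K (τ ∘ Z) Zstar := dMis_le Z Zstar τ
    have h2 : hammD n K (τ ∘ Z) Zstar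
        ≤ hammD n K (τ ∘ Function.update Z i (σ.symm (Zstar i))) Zstar + 1 := by
      calc hammD n K (τ ∘ Z) Zstar
          ≤ hammD n K (τ ∘ Z) (τ ∘ Function.update Z i (σ.symm (Zstar i)))
            + hammD n K (τ ∘ Function.update Z i (σ.symm (Zstar i))) Zstar :=
            hammD_triangle _ _ _
        _ = 1 + hammD n K (τ ∘ Function.update Z i (σ.symm (Zstar i))) Zstar := by
            rw [hammD_comp, hammD_flip σ Z Zstar i hi]
        _ = _ := by ring
    omega

lemma commSize_flip_src (hi : σ (Z i) ≠ Zstar i) :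
    commSize n K (Function.update Z i (σ.symm (Zstar i))) (Z i) + 1 = commSize n K Z (Z i) := by
  classical
  have hset : (Finset.univ.filter fun j => Function.update Z i (σ.symm (Zstar i)) j = Z i)
      = (Finset.univ.filter fun j => Z j = Z i).erase i := by
    ext j
    simp only [mem_filter, mem_univ, true_and, mem_erase]
    rcases eq_or_ne j i with rfl | hne
    · simp [Function.update_self, (flip_ne σ Z Zstar j hi).symm]
    · rw [Function.update_of_ne hne]; simp [hne]
  rw [commSize, hset, card_erase_of_mem (by simp), commSize, Nat.sub_add_cancel]
  exact Finset.card_pos.mpr ⟨i, mem_filter.mpr ⟨mem_univ i, rfl⟩⟩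

lemma commSize_flip_tgt (hi : σ (Z i) ≠ Zstar i) :
    commSize n K (Function.update Z i (σ.symm (Zstar i))) (σ.symm (Zstar i))
      = commSize n K Z (σ.symm (Zstar i)) + 1 := by
  classical
  have hset : (Finset.univ.filter fun j => Function.update Z i (σ.symm (Zstar i)) j = σ.symm (Zstar i))
      = insert i (Finset.univ.filter fun j => Z j = σ.symm (Zstar i)) := by
    ext j
    simp only [mem_filter, mem_univ, true_and, mem_insert]
    rcases eq_or_ne j i with rfl | hne
    · simp [Function.update_self]
    · rw [Function.update_of_ne hne]; simp [hne]
  rw [commSize, hset, card_insert_of_notMem (by simp [flip_ne σ Z Zstar i hi]), commSize]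

lemma commSize_flip_other (a : Fin K) (ha1 : a ≠ Z i) (ha2 : a ≠ σ.symm (Zstar i)) :
    commSize n K (Function.update Z i (σ.symm (Zstar i))) a = commSize n K Z a := by
  classical
  rw [commSize, commSize]
  congr 1
  apply filter_congr
  intro j _
  rcases eq_or_ne j i with rfl | hne
  · simp [Function.update_self, Ne.symm ha1, Ne.symm ha2]
  · rw [Function.update_of_ne hne]

end flip

section count
variable {n K : ℕ} (σ : Equiv.Perm (Fin K)) (Z Zstar : Fin n → Fin K)

lemma card_split (p q : Fin n → Prop) [DecidablePred p] [DecidablePred q] :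
    (Finset.univ.filter fun j => p j ∧ q j).card
      + (Finset.univ.filter fun j => p j ∧ ¬ q j).card = (Finset.univ.filter p).card := by
  classical
  rw [← Finset.filter_filter, ← Finset.filter_filter]
  exact Finset.card_filter_add_card_filter_not _

lemma out_count (a : Fin K) :
    ((Finset.univ.filter fun j => σ (Z j) ≠ Zstar j).filter fun j => Z j = a).card
      + (Finset.univ.filter fun j => Z j = a ∧ Zstar j = σ a).card = commSize n K Z a := by
  classical
  have h1 : ((Finset.univ.filter fun j => σ (Z j) ≠ Zstar j).filter fun j => Z j = a)
      = Finset.univ.filter fun j => Z j = a ∧ ¬ (Zstar j = σ a) := by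
    ext j
    simp only [mem_filter, mem_univ, true_and]
    constructor
    · rintro ⟨h1, h2⟩
      subst h2
      exact ⟨rfl, fun h => h1 h.symm⟩
    · rintro ⟨h1, h2⟩
      subst h1
      exact ⟨fun h => h2 h.symm, rfl⟩
  rw [h1, commSize]
  have := card_split (fun j => Z j = a) (fun j => Zstar j = σ a)
  omega

lemma in_count (a : Fin K) :
    ((Finset.univ.filter fun j => σ (Z j) ≠ Zstar j).filter fun j => σ.symm (Zstar j) = a).card
      + (Finset.univ.filter fun j => Z j = a ∧ Zstar j = σ a).card
      = commSize n K Zstar (σ a) := by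
  classical
  have h1 : ((Finset.univ.filter fun j => σ (Z j) ≠ Zstar j).filter fun j => σ.symm (Zstar j) = a)
      = Finset.univ.filter fun j => Zstar j = σ a ∧ ¬ (Z j = a) := by
    ext j
    simp only [mem_filter, mem_univ, true_and]
    constructor
    · rintro ⟨h1, h2⟩
      have hz : Zstar j = σ a := by
        rw [← h2]; simp
      refine ⟨hz, fun hza => h1 (by rw [hza, hz])⟩
    · rintro ⟨h1, h2⟩
      exact ⟨fun h => h2 (σ.injective (h.trans h1)), by rw [h1]; simp⟩
  have h2 : (Finset.univ.filter fun j => Z j = a ∧ Zstar j = σ a)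
      = Finset.univ.filter fun j => Zstar j = σ a ∧ Z j = a := by
    ext j; simp [and_comm]
  rw [h1, h2, commSize]
  have := card_split (fun j => Zstar j = σ a) (fun j => Z j = a)
  omega

end count

lemma filter_mem_card_eq_sum {n K : ℕ} (M : Finset (Fin n)) (f : Fin n → Fin K) (S : Finset (Fin K)) :
    (M.filter fun i => f i ∈ S).card = ∑ a ∈ S, (M.filter fun i => f i = a).card := by
  classical
  rw [Finset.card_eq_sum_card_fiberwise (f := f) (s := M.filter fun i => f i ∈ S) (t := S) (fun x hx => (mem_filter.mp hx).2)]
  apply Finset.sum_congr rfl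
  intro a ha
  congr 1
  ext x
  simp only [mem_filter]
  constructor
  · rintro ⟨⟨h1, h2⟩, h3⟩
    exact ⟨h1, h3⟩
  · rintro ⟨h1, h2⟩
    exact ⟨⟨h1, h2 ▸ ha⟩, h2⟩


/-- The feasible set `S_α` of balanced label assignments. -/
noncomputable def Salpha (n K : ℕ) (α : ℝ) : Finset (Fin n → Fin K) :=
  Finset.univ.filter fun Z => ∀ a : Fin K,
    (n : ℝ) / (α * K) ≤ commSize n K Z a ∧ (commSize n K Z a : ℝ) ≤ α * n / K

/-- **Size of the set of improving neighbors**: for `Z ∈ S_α` with `m = d(Z,Z*) ≥ 1`, the set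
`B(Z)` of single-flip neighbors which decrease the number of misclassified nodes satisfies
`|S_α ∩ B(Z)| ≥ min{ n/(βK) − n/(αK) − 1, (α−β)n/K − 1, m }`. -/
theorem improving_neighbors_card (n K : ℕ) (hK : 0 < K) (α β : ℝ)
    (hβ : 1 ≤ β) (hαβ : β < α)
    (Zstar : Fin n → Fin K)
    (hZstar : ∀ a : Fin K,
      (n : ℝ) / (β * K) ≤ commSize n K Zstar a ∧ (commSize n K Zstar a : ℝ) ≤ β * n / K)
    (Z : Fin n → Fin K) (hZ : Z ∈ Salpha n K α) (hm : 1 ≤ dMis n K Z Zstar) :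
    min (min ((n : ℝ) / (β * K) - (n : ℝ) / (α * K) - 1) ((α - β) * n / K - 1))
        (dMis n K Z Zstar : ℝ) ≤
      ((Salpha n K α ∩
        Finset.univ.filter fun Z' : Fin n → Fin K =>
          hammD n K Z Z' = 1 ∧ dMis n K Z' Zstar = dMis n K Z Zstar - 1).card : ℝ) := by
  classical
  -- basic positivity facts
  have hK0 : (0:ℝ) < K := by exact_mod_cast hK
  have hβ0 : (0:ℝ) < β := by linarith
  have hα0 : (0:ℝ) < α := by linarith
  have hZbal : ∀ a : Fin K,
      (n : ℝ) / (α * K) ≤ commSize n K Z a ∧ (commSize n K Z a : ℝ) ≤ α * n / K := by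
    have := hZ
    simp only [Salpha, mem_filter, mem_univ, true_and] at this
    exact this
  -- optimal permutation
  obtain ⟨σ, -, hσ⟩ := Finset.exists_mem_eq_inf'
    (⟨1, Finset.mem_univ 1⟩ : (Finset.univ : Finset (Equiv.Perm (Fin K))).Nonempty)
    (fun σ : Equiv.Perm (Fin K) => hammD n K (σ ∘ Z) Zstar)
  have hopt : dMis n K Z Zstar = hammD n K (σ ∘ Z) Zstar := hσ
  set M : Finset (Fin n) := Finset.univ.filter fun j => σ (Z j) ≠ Zstar j with hM
  have hMcard : M.card = dMis n K Z Zstar := by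
    rw [hopt]; rfl
  -- the good set
  set GS : Finset (Fin n) := M.filter fun i =>
    (n:ℝ)/(α*K) ≤ (commSize n K Z (Z i) : ℝ) - 1 ∧
      (commSize n K Z (σ.symm (Zstar i)) : ℝ) + 1 ≤ α * n / K with hGS
  -- each good misclassified node yields a distinct improving neighbor
  have hinj : GS.card ≤ (Salpha n K α ∩
      Finset.univ.filter fun Z' : Fin n → Fin K =>
        hammD n K Z Z' = 1 ∧ dMis n K Z' Zstar = dMis n K Z Zstar - 1).card := by
    apply Finset.card_le_card_of_injOn (fun i => Function.update Z i (σ.symm (Zstar i)))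
    · intro i hiG
      rw [hGS, mem_coe, mem_filter] at hiG
      obtain ⟨hiM, hg1, hg2⟩ := hiG
      rw [hM, mem_filter] at hiM
      have hi : σ (Z i) ≠ Zstar i := hiM.2
      rw [Finset.mem_coe, Finset.mem_inter, Finset.mem_filter]
      refine ⟨?_, Finset.mem_univ _, hammD_flip σ Z Zstar i hi, dMis_flip σ Z Zstar i hi hopt⟩
      rw [Salpha, Finset.mem_filter]
      refine ⟨Finset.mem_univ _, fun a => ?_⟩
      by_cases ha1 : a = Z i
      · subst ha1
        have hc := commSize_flip_src σ Z Zstar i hi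
        have hb := (hZbal (Z i)).2
        constructor
        · have : (commSize n K (Function.update Z i (σ.symm (Zstar i))) (Z i) : ℝ)
              = (commSize n K Z (Z i) : ℝ) - 1 := by
            have := hc; push_cast [← this]; ring
          rw [this]; exact hg1
        · have : (commSize n K (Function.update Z i (σ.symm (Zstar i))) (Z i) : ℝ)
              = (commSize n K Z (Z i) : ℝ) - 1 := by
            have := hc; push_cast [← this]; ring
          rw [this]; linarith
      · by_cases ha2 : a = σ.symm (Zstar i)
        · subst ha2
          have hc := commSize_flip_tgt σ Z Zstar i hi
          have hb := (hZbal (σ.symm (Zstar i))).1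
          rw [hc]
          push_cast
          constructor
          · linarith
          · exact hg2
        · rw [commSize_flip_other σ Z Zstar i a ha1 ha2]
          exact hZbal a
    · intro i hiG j hjG hij
      simp only at hij
      by_contra hne
      have h1 := congrFun hij i
      rw [Function.update_self, Function.update_of_ne (fun h => hne h)] at h1
      simp only [hGS, hM, coe_filter, Set.mem_setOf_eq, mem_filter, mem_univ, true_and] at hiG
      exact flip_ne σ Z Zstar i hiG.1 h1.symm
  -- reduce to bounding the good set
  have hfin : (GS.card : ℝ) ≤ ((Salpha n K α ∩
      Finset.univ.filter fun Z' : Fin n → Fin K =>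
        hammD n K Z Z' = 1 ∧ dMis n K Z' Zstar = dMis n K Z Zstar - 1).card : ℝ) := by
    exact_mod_cast hinj
  refine le_trans ?_ hfin
  set A : ℝ := (n:ℝ)/(β*K) - (n:ℝ)/(α*K) - 1 with hAdef
  set B : ℝ := (α-β)*(n:ℝ)/K - 1 with hBdef
  by_cases hAB : min A B ≤ 0
  · calc min (min A B) (dMis n K Z Zstar : ℝ) ≤ min A B := min_le_left _ _
      _ ≤ 0 := hAB
      _ ≤ (GS.card : ℝ) := Nat.cast_nonneg _
  push_neg at hAB
  have hA : 0 < A := lt_of_lt_of_le hAB (min_le_left _ _)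
  have hB : 0 < B := lt_of_lt_of_le hAB (min_le_right _ _)
  have hexp : (α - β) * (n:ℝ)/K = α*(n:ℝ)/K - β*(n:ℝ)/K := by ring
  have h1 : (n:ℝ)/(β*K) ≤ β*(n:ℝ)/K := by
    rw [div_le_div_iff₀ (by positivity) hK0]
    nlinarith [mul_nonneg (mul_nonneg (sub_nonneg.mpr hβ) (Nat.cast_nonneg (α := ℝ) n)) hK0.le,
      mul_nonneg (Nat.cast_nonneg (α := ℝ) n) hK0.le, hβ]
  have key : (n:ℝ)/(α*K) + 2 < α*(n:ℝ)/K := by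
    rw [hBdef, hexp] at hB
    rw [hAdef] at hA
    linarith
  set Lset : Finset (Fin K) :=
    Finset.univ.filter (fun a : Fin K => (commSize n K Z a : ℝ) - 1 < (n:ℝ)/(α*K)) with hLs
  set Hset : Finset (Fin K) :=
    Finset.univ.filter (fun b : Fin K => α*(n:ℝ)/K < (commSize n K Z b : ℝ) + 1) with hHs
  have hmemL : ∀ a : Fin K, a ∈ Lset ↔ (commSize n K Z a : ℝ) - 1 < (n:ℝ)/(α*K) := by
    intro a; rw [hLs, mem_filter]; simp
  have hmemH : ∀ b : Fin K, b ∈ Hset ↔ α*(n:ℝ)/K < (commSize n K Z b : ℝ) + 1 := by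
    intro b; rw [hHs, mem_filter]; simp
  rcases Lset.eq_empty_or_nonempty with hL | hL
  · rcases Hset.eq_empty_or_nonempty with hH | hH
    · -- both empty: every misclassified node is good
      have hGSM : GS = M := by
        rw [hGS]
        apply Finset.filter_true_of_mem
        intro i _
        constructor
        · have : Z i ∉ Lset := by rw [hL]; exact notMem_empty _
          rw [hmemL, not_lt] at this
          exact this
        · have : σ.symm (Zstar i) ∉ Hset := by rw [hH]; exact notMem_empty _
          rw [hmemH, not_lt] at this
          exact this
      have : (dMis n K Z Zstar : ℝ) = (GS.card : ℝ) := by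
        rw [hGSM, hMcard]
      calc min (min A B) (dMis n K Z Zstar : ℝ) ≤ (dMis n K Z Zstar : ℝ) := min_le_right _ _
        _ = (GS.card : ℝ) := this
    · -- Hset nonempty: flips out of heavy communities
      have hsub : M.filter (fun i => Z i ∈ Hset ∧ σ.symm (Zstar i) ∉ Hset) ⊆ GS := by
        rw [hGS]
        intro i hi
        rw [mem_filter] at hi ⊢
        refine ⟨hi.1, ?_, ?_⟩
        · have h2 := (hmemH (Z i)).mp hi.2.1
          linarith
        · have h2 := hi.2.2
          rw [hmemH, not_lt] at h2
          exact h2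
      have hc1 : (M.filter fun i => Z i ∈ Hset).card
          ≤ (M.filter (fun i => Z i ∈ Hset ∧ σ.symm (Zstar i) ∉ Hset)).card
            + (M.filter fun i => σ.symm (Zstar i) ∈ Hset).card := by
        refine le_trans (Finset.card_le_card ?_) (Finset.card_union_le _ _)
        intro i hi
        rw [mem_filter] at hi
        rw [mem_union]
        by_cases h : σ.symm (Zstar i) ∈ Hset
        · exact Or.inr (mem_filter.mpr ⟨hi.1, h⟩)
        · exact Or.inl (mem_filter.mpr ⟨hi.1, hi.2, h⟩)
      have hsum_out : (M.filter fun i => Z i ∈ Hset).card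
          = ∑ b ∈ Hset, (M.filter fun i => Z i = b).card :=
        filter_mem_card_eq_sum M _ Hset
      have hsum_in : (M.filter fun i => σ.symm (Zstar i) ∈ Hset).card
          = ∑ b ∈ Hset, (M.filter fun i => σ.symm (Zstar i) = b).card :=
        filter_mem_card_eq_sum M _ Hset
      have hterm : ∀ b ∈ Hset,
          ((M.filter fun i => σ.symm (Zstar i) = b).card : ℝ) + B
            ≤ ((M.filter fun i => Z i = b).card : ℝ) := by
        intro b hb
        have h_in : (M.filter fun j => σ.symm (Zstar j) = b).card
            + (Finset.univ.filter fun j => Z j = b ∧ Zstar j = σ b).card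
            = commSize n K Zstar (σ b) := by
          rw [hM]; exact in_count σ Z Zstar b
        have h_out : (M.filter fun j => Z j = b).card
            + (Finset.univ.filter fun j => Z j = b ∧ Zstar j = σ b).card
            = commSize n K Z b := by
          rw [hM]; exact out_count σ Z Zstar b
        have hb1 : (commSize n K Zstar (σ b) : ℝ) ≤ β*(n:ℝ)/K := (hZstar (σ b)).2
        have hb2 : α*(n:ℝ)/K < (commSize n K Z b : ℝ) + 1 := (hmemH b).mp hb
        have e1 : ((M.filter fun j => σ.symm (Zstar j) = b).card : ℝ)
            + ((Finset.univ.filter fun j => Z j = b ∧ Zstar j = σ b).card : ℝ)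
            = (commSize n K Zstar (σ b) : ℝ) := by exact_mod_cast h_in
        have e2 : ((M.filter fun j => Z j = b).card : ℝ)
            + ((Finset.univ.filter fun j => Z j = b ∧ Zstar j = σ b).card : ℝ)
            = (commSize n K Z b : ℝ) := by exact_mod_cast h_out
        rw [hBdef, hexp]
        linarith
      have hsum_le : (∑ b ∈ Hset, ((M.filter fun i => σ.symm (Zstar i) = b).card : ℝ))
            + Hset.card * B
          ≤ ∑ b ∈ Hset, ((M.filter fun i => Z i = b).card : ℝ) := by
        have h := Finset.sum_le_sum hterm
        rw [Finset.sum_add_distrib, Finset.sum_const, nsmul_eq_mul] at h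
        exact h
      have hH1 : (1:ℝ) ≤ Hset.card := by
        have := Finset.card_pos.mpr hH
        exact_mod_cast this
      have hBle : B ≤ (Hset.card : ℝ) * B := by nlinarith
      have c1 : ((M.filter fun i => Z i ∈ Hset).card : ℝ)
          ≤ ((M.filter (fun i => Z i ∈ Hset ∧ σ.symm (Zstar i) ∉ Hset)).card : ℝ)
            + ((M.filter fun i => σ.symm (Zstar i) ∈ Hset).card : ℝ) := by exact_mod_cast hc1
      have c2 : ((M.filter fun i => Z i ∈ Hset).card : ℝ)
          = ∑ b ∈ Hset, ((M.filter fun i => Z i = b).card : ℝ) := by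
        rw [hsum_out]; push_cast; rfl
      have c3 : ((M.filter fun i => σ.symm (Zstar i) ∈ Hset).card : ℝ)
          = ∑ b ∈ Hset, ((M.filter fun i => σ.symm (Zstar i) = b).card : ℝ) := by
        rw [hsum_in]; push_cast; rfl
      have final : B ≤ ((M.filter (fun i => Z i ∈ Hset ∧ σ.symm (Zstar i) ∉ Hset)).card : ℝ) := by
        linarith
      calc min (min A B) (dMis n K Z Zstar : ℝ) ≤ min A B := min_le_left _ _
        _ ≤ B := min_le_right _ _
        _ ≤ ((M.filter (fun i => Z i ∈ Hset ∧ σ.symm (Zstar i) ∉ Hset)).card : ℝ) := final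
        _ ≤ (GS.card : ℝ) := by exact_mod_cast Finset.card_le_card hsub
  · -- Lset nonempty: flips into light communities
    have hsub : M.filter (fun i => σ.symm (Zstar i) ∈ Lset ∧ Z i ∉ Lset) ⊆ GS := by
      rw [hGS]
      intro i hi
      rw [mem_filter] at hi ⊢
      refine ⟨hi.1, ?_, ?_⟩
      · have h2 := hi.2.2
        rw [hmemL, not_lt] at h2
        exact h2
      · have h2 := (hmemL (σ.symm (Zstar i))).mp hi.2.1
        linarith
    have hc1 : (M.filter fun i => σ.symm (Zstar i) ∈ Lset).card
        ≤ (M.filter (fun i => σ.symm (Zstar i) ∈ Lset ∧ Z i ∉ Lset)).card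
          + (M.filter fun i => Z i ∈ Lset).card := by
      refine le_trans (Finset.card_le_card ?_) (Finset.card_union_le _ _)
      intro i hi
      rw [mem_filter] at hi
      rw [mem_union]
      by_cases h : Z i ∈ Lset
      · exact Or.inr (mem_filter.mpr ⟨hi.1, h⟩)
      · exact Or.inl (mem_filter.mpr ⟨hi.1, hi.2, h⟩)
    have hsum_out : (M.filter fun i => Z i ∈ Lset).card
        = ∑ a ∈ Lset, (M.filter fun i => Z i = a).card :=
      filter_mem_card_eq_sum M _ Lset
    have hsum_in : (M.filter fun i => σ.symm (Zstar i) ∈ Lset).card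
        = ∑ a ∈ Lset, (M.filter fun i => σ.symm (Zstar i) = a).card :=
      filter_mem_card_eq_sum M _ Lset
    have hterm : ∀ a ∈ Lset,
        ((M.filter fun i => Z i = a).card : ℝ) + A
          ≤ ((M.filter fun i => σ.symm (Zstar i) = a).card : ℝ) := by
      intro a ha
      have h_in : (M.filter fun j => σ.symm (Zstar j) = a).card
          + (Finset.univ.filter fun j => Z j = a ∧ Zstar j = σ a).card
          = commSize n K Zstar (σ a) := by
        rw [hM]; exact in_count σ Z Zstar a
      have h_out : (M.filter fun j => Z j = a).card
          + (Finset.univ.filter fun j => Z j = a ∧ Zstar j = σ a).card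
          = commSize n K Z a := by
        rw [hM]; exact out_count σ Z Zstar a
      have hb1 : (n:ℝ)/(β*K) ≤ (commSize n K Zstar (σ a) : ℝ) := (hZstar (σ a)).1
      have hb2 : (commSize n K Z a : ℝ) - 1 < (n:ℝ)/(α*K) := (hmemL a).mp ha
      have e1 : ((M.filter fun j => σ.symm (Zstar j) = a).card : ℝ)
          + ((Finset.univ.filter fun j => Z j = a ∧ Zstar j = σ a).card : ℝ)
          = (commSize n K Zstar (σ a) : ℝ) := by exact_mod_cast h_in
      have e2 : ((M.filter fun j => Z j = a).card : ℝ)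
          + ((Finset.univ.filter fun j => Z j = a ∧ Zstar j = σ a).card : ℝ)
          = (commSize n K Z a : ℝ) := by exact_mod_cast h_out
      rw [hAdef]
      linarith
    have hsum_le : (∑ a ∈ Lset, ((M.filter fun i => Z i = a).card : ℝ))
          + Lset.card * A
        ≤ ∑ a ∈ Lset, ((M.filter fun i => σ.symm (Zstar i) = a).card : ℝ) := by
      have h := Finset.sum_le_sum hterm
      rw [Finset.sum_add_distrib, Finset.sum_const, nsmul_eq_mul] at h
      exact h
    have hL1 : (1:ℝ) ≤ Lset.card := by
      have := Finset.card_pos.mpr hL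
      exact_mod_cast this
    have hAle : A ≤ (Lset.card : ℝ) * A := by nlinarith
    have c1 : ((M.filter fun i => σ.symm (Zstar i) ∈ Lset).card : ℝ)
        ≤ ((M.filter (fun i => σ.symm (Zstar i) ∈ Lset ∧ Z i ∉ Lset)).card : ℝ)
          + ((M.filter fun i => Z i ∈ Lset).card : ℝ) := by exact_mod_cast hc1
    have c2 : ((M.filter fun i => Z i ∈ Lset).card : ℝ)
        = ∑ a ∈ Lset, ((M.filter fun i => Z i = a).card : ℝ) := by
      rw [hsum_out]; push_cast; rfl
    have c3 : ((M.filter fun i => σ.symm (Zstar i) ∈ Lset).card : ℝ)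
        = ∑ a ∈ Lset, ((M.filter fun i => σ.symm (Zstar i) = a).card : ℝ) := by
      rw [hsum_in]; push_cast; rfl
    have final : A ≤ ((M.filter (fun i => σ.symm (Zstar i) ∈ Lset ∧ Z i ∉ Lset)).card : ℝ) := by
      linarith
    calc min (min A B) (dMis n K Z Zstar : ℝ) ≤ min A B := min_le_left _ _
      _ ≤ A := min_le_left _ _
      _ ≤ ((M.filter (fun i => σ.symm (Zstar i) ∈ Lset ∧ Z i ∉ Lset)).card : ℝ) := final
      _ ≤ (GS.card : ℝ) := by exact_mod_cast Finset.card_le_card hsub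
end

section
/- Counting bounds for disagreement pairs: let Z, Z* ∈ [K]^n with m = H(Z, Z*) = #{i : Z_i ≠ Z*_i}, suppose every community size of Z is at most αn/K and every community size of Z* is at most βn/K, for constants α, β ≥ 1. Define N_d = #{(i,j) : i < j, Z_i = Z_j, Z*_i ≠ Z*_j} and N_s = #{(i,j) : i < j, Z*_i = Z*_j, Z_i ≠ Z_j}. Then N_d ≤ αmn/K and N_s ≤ βmn/K. -/
open Finset

lemma key_card_le (n K : ℕ) (Z W : Fin n → Fin K) :
    (Finset.univ.filter fun e : Fin n × Fin n =>
        e.1 < e.2 ∧ Z e.1 = Z e.2 ∧ W e.1 ≠ W e.2).card ≤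
      ∑ d ∈ Finset.univ.filter (fun i => Z i ≠ W i), commSize n K Z (Z d) := by
  classical
  set D : Finset (Fin n) := Finset.univ.filter (fun i => Z i ≠ W i) with hD
  set S : Finset (Fin n × Fin n) := Finset.univ.filter fun e : Fin n × Fin n =>
        e.1 < e.2 ∧ Z e.1 = Z e.2 ∧ W e.1 ≠ W e.2 with hS
  set T : Finset (Fin n × Fin n) :=
    D.biUnion (fun d => ({d} : Finset (Fin n)) ×ˢ (Finset.univ.filter fun k => Z k = Z d))
    with hT
  have hst : S.card ≤ T.card := by
    apply Finset.card_le_card_of_injOn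
      (fun e => if Z e.1 ≠ W e.1 then e else (e.2, e.1))
    · intro e he
      simp only [hS, Finset.mem_coe, Finset.mem_filter, Finset.mem_univ, true_and] at he
      obtain ⟨hlt, hZZ, hWW⟩ := he
      by_cases h1 : Z e.1 ≠ W e.1
      · dsimp only
        rw [if_pos h1]
        simp only [hT, Finset.mem_coe, Finset.mem_biUnion]
        exact ⟨e.1, by simp [hD, h1], Finset.mem_product.2 ⟨Finset.mem_singleton_self _, by simp [hZZ.symm]⟩⟩
      · push_neg at h1
        have h2 : Z e.2 ≠ W e.2 := fun h2 => hWW (by rw [← h1, ← h2, hZZ])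
        dsimp only
        rw [if_neg (not_not_intro h1)]
        simp only [hT, Finset.mem_coe, Finset.mem_biUnion]
        exact ⟨e.2, by simp [hD, h2], Finset.mem_product.2 ⟨Finset.mem_singleton_self _, by simp [hZZ]⟩⟩
    · intro a ha b hb hab
      simp only [hS, Finset.coe_filter, Set.mem_setOf_eq, Finset.mem_univ, true_and]
        at ha hb
      dsimp only at hab
      by_cases h1 : Z a.1 ≠ W a.1 <;> by_cases h2 : Z b.1 ≠ W b.1
      · rwa [if_pos h1, if_pos h2] at hab
      · rw [if_pos h1, if_neg h2] at hab
        have e1 : a.1 = b.2 := congrArg Prod.fst hab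
        have e2 : a.2 = b.1 := congrArg Prod.snd hab
        have : b.2 < b.1 := by rw [← e1, ← e2]; exact ha.1
        exact absurd this (asymm hb.1)
      · rw [if_neg h1, if_pos h2] at hab
        have e1 : a.2 = b.1 := congrArg Prod.fst hab
        have e2 : a.1 = b.2 := congrArg Prod.snd hab
        have : b.2 < b.1 := by rw [← e2, ← e1]; exact ha.1
        exact absurd this (asymm hb.1)
      · rw [if_neg h1, if_neg h2] at hab
        have e1 : a.2 = b.2 := congrArg Prod.fst hab
        have e2 : a.1 = b.1 := congrArg Prod.snd hab
        exact Prod.ext e2 e1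
  refine hst.trans ?_
  refine (Finset.card_biUnion_le).trans ?_
  apply Finset.sum_le_sum
  intro d _
  simp [commSize]

/-- **Counting bounds for disagreement pairs**: with `m = H(Z,Z*)`, community sizes of `Z`
at most `αn/K` and of `Z*` at most `βn/K`, the counts
`N_d = #{(i,j) : i<j, Z_i=Z_j, Z*_i≠Z*_j}` and `N_s = #{(i,j) : i<j, Z*_i=Z*_j, Z_i≠Z_j}`
satisfy `N_d ≤ αmn/K` and `N_s ≤ βmn/K`. -/
theorem disagreement_pair_bounds (n K : ℕ) (hK : 0 < K) (α β : ℝ)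
    (hα : 1 ≤ α) (hβ : 1 ≤ β)
    (Z Zstar : Fin n → Fin K)
    (hZ : ∀ a : Fin K, (commSize n K Z a : ℝ) ≤ α * n / K)
    (hZstar : ∀ a : Fin K, (commSize n K Zstar a : ℝ) ≤ β * n / K)
    (m : ℕ) (hm : m = hammD n K Z Zstar) :
    (((Finset.univ.filter fun e : Fin n × Fin n =>
          e.1 < e.2 ∧ Z e.1 = Z e.2 ∧ Zstar e.1 ≠ Zstar e.2).card : ℝ) ≤
        α * m * n / K) ∧
    (((Finset.univ.filter fun e : Fin n × Fin n =>
          e.1 < e.2 ∧ Zstar e.1 = Zstar e.2 ∧ Z e.1 ≠ Z e.2).card : ℝ) ≤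
        β * m * n / K) := by
  classical
  have hflip : (Finset.univ.filter fun i => Zstar i ≠ Z i) =
      (Finset.univ.filter fun i => Z i ≠ Zstar i) := by
    apply Finset.filter_congr; intro i _; simp [ne_comm]
  constructor
  · have h1 := key_card_le n K Z Zstar
    calc ((Finset.univ.filter fun e : Fin n × Fin n =>
          e.1 < e.2 ∧ Z e.1 = Z e.2 ∧ Zstar e.1 ≠ Zstar e.2).card : ℝ)
        ≤ ∑ d ∈ Finset.univ.filter (fun i => Z i ≠ Zstar i),
            (commSize n K Z (Z d) : ℝ) := by exact_mod_cast h1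
      _ ≤ ∑ d ∈ Finset.univ.filter (fun i => Z i ≠ Zstar i), (α * n / K) :=
          Finset.sum_le_sum (fun d _ => hZ (Z d))
      _ = (m : ℝ) * (α * n / K) := by
          rw [Finset.sum_const, hm, hammD]; simp [nsmul_eq_mul]
      _ = α * m * n / K := by ring
  · have h1 := key_card_le n K Zstar Z
    calc ((Finset.univ.filter fun e : Fin n × Fin n =>
          e.1 < e.2 ∧ Zstar e.1 = Zstar e.2 ∧ Z e.1 ≠ Z e.2).card : ℝ)
        ≤ ∑ d ∈ Finset.univ.filter (fun i => Zstar i ≠ Z i),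
            (commSize n K Zstar (Zstar d) : ℝ) := by exact_mod_cast h1
      _ ≤ ∑ d ∈ Finset.univ.filter (fun i => Zstar i ≠ Z i), (β * n / K) :=
          Finset.sum_le_sum (fun d _ => hZstar (Zstar d))
      _ = (m : ℝ) * (β * n / K) := by
          rw [Finset.sum_const, hflip, hm, hammD]; simp [nsmul_eq_mul]
      _ = β * m * n / K := by ring
end

section
/- Exact Chernoff-type identity for Bernoulli variables: let 0 < q < p < 1, t* = (1/2)·log(p(1−q)/(q(1−p))), λ* = log((1−q)/(1−p)) / log(p(1−q)/(q(1−p))), and I = −2·log(√(pq) + √((1−p)(1−q))). If x ~ Bernoulli(q) then E[exp(t*(x − λ*))] = exp(−I/2), and if y ~ Bernoulli(p) then E[exp(−t*(y − λ*))] = exp(−I/2). Consequently, for independent random variables x₁,…,x_{n₁} i.i.d. Bernoulli(q) and y₁,…,y_{n₂} i.i.d. Bernoulli(p), E[exp(t*(Σ_{i=1}^{n₁}(x_i − λ*) − Σ_{j=1}^{n₂}(y_j − λ*)))] = exp(−(n₁+n₂)·I/2). -/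
open MeasureTheory ProbabilityTheory

private lemma bern_integral {Ω : Type*} [MeasurableSpace Ω] (μ : Measure Ω)
    [IsProbabilityMeasure μ] (W : Ω → ℝ) (hW : Measurable W)
    (hval : ∀ ω, W ω = 0 ∨ W ω = 1) (c : ℝ) (hc0 : 0 ≤ c)
    (hdist : μ {ω | W ω = 1} = ENNReal.ofReal c) (g : ℝ → ℝ) :
    ∫ ω, g (W ω) ∂μ = c * g 1 + (1 - c) * g 0 := by
  have hS : MeasurableSet {ω | W ω = 1} := hW (measurableSet_singleton 1)
  have hWind : W = Set.indicator {ω | W ω = 1} (fun _ => (1:ℝ)) := by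
    funext ω
    rcases hval ω with h | h
    · rw [Set.indicator_of_notMem, h]
      simp [Set.mem_setOf_eq, h]
    · rw [h, Set.indicator_of_mem]
      exact h
  have hWint : Integrable W μ := by
    rw [hWind]
    exact (integrable_const (1:ℝ)).indicator hS
  have hintW : ∫ ω, W ω ∂μ = c := by
    conv_lhs => rw [hWind]
    rw [MeasureTheory.integral_indicator_const _ hS, measureReal_def, hdist, smul_eq_mul, mul_one,
      ENNReal.toReal_ofReal hc0]
  have hfun : (fun ω => g (W ω)) = fun ω => g 0 + (g 1 - g 0) * W ω := by
    funext ω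
    rcases hval ω with h | h <;> rw [h] <;> ring
  rw [hfun, integral_add (integrable_const _) (hWint.const_mul _),
    integral_const, integral_const_mul, hintW]
  simp only [measureReal_def, measure_univ, ENNReal.toReal_one, smul_eq_mul, one_mul]
  ring

private lemma scalar_facts (p q : ℝ) (hq : 0 < q) (hqp : q < p) (hp : p < 1)
    (tstar lamstar : ℝ)
    (ht : tstar = Real.log (p * (1 - q) / (q * (1 - p))) / 2)
    (hlam : lamstar =
      Real.log ((1 - q) / (1 - p)) / Real.log (p * (1 - q) / (q * (1 - p)))) :
    (q * Real.exp (tstar * (1 - lamstar)) + (1 - q) * Real.exp (tstar * (0 - lamstar))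
      = Real.sqrt (p * q) + Real.sqrt ((1 - p) * (1 - q))) ∧
    (p * Real.exp (-tstar * (1 - lamstar)) + (1 - p) * Real.exp (-tstar * (0 - lamstar))
      = Real.sqrt (p * q) + Real.sqrt ((1 - p) * (1 - q))) := by
  have hp0 : 0 < p := hq.trans hqp
  have h1p : 0 < 1 - p := by linarith
  have h1q : 0 < 1 - q := by linarith
  set r : ℝ := p * (1 - q) / (q * (1 - p)) with hr
  set s : ℝ := (1 - q) / (1 - p) with hs
  have hr0 : 0 < r := by positivity
  have hs0 : 0 < s := by positivity
  have hr1 : 1 < r := by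
    rw [hr, lt_div_iff₀ (by positivity)]
    nlinarith
  have hlogr : Real.log r ≠ 0 := ne_of_gt (Real.log_pos hr1)
  have hts : tstar * lamstar = Real.log s / 2 := by
    rw [ht, hlam]; field_simp
  have hexpt : Real.exp tstar = Real.sqrt r := by
    rw [ht, Real.sqrt_eq_rpow, Real.rpow_def_of_pos hr0]; ring_nf
  have hexptl : Real.exp (tstar * lamstar) = Real.sqrt s := by
    rw [hts, Real.sqrt_eq_rpow, Real.rpow_def_of_pos hs0]; ring_nf
  have e1 : Real.exp (tstar * (1 - lamstar)) = Real.sqrt (p / q) := by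
    have h : tstar * (1 - lamstar) = tstar - tstar * lamstar := by ring
    rw [h, Real.exp_sub, hexpt, hexptl, ← Real.sqrt_div hr0.le]
    congr 1
    rw [hr, hs]; field_simp
  have e2 : q * Real.sqrt (p / q) = Real.sqrt (p * q) := by
    have h : q * Real.sqrt (p / q) = Real.sqrt (q ^ 2 * (p / q)) := by
      rw [Real.sqrt_mul (sq_nonneg q), Real.sqrt_sq hq.le]
    rw [h]; congr 1; field_simp
  have e3 : Real.exp (tstar * (0 - lamstar)) = Real.sqrt s⁻¹ := by
    have h : tstar * (0 - lamstar) = -(tstar * lamstar) := by ring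
    rw [h, Real.exp_neg, hexptl, Real.sqrt_inv]
  have e4 : (1 - q) * Real.sqrt s⁻¹ = Real.sqrt ((1 - p) * (1 - q)) := by
    have h : (1 - q) * Real.sqrt s⁻¹ = Real.sqrt ((1 - q) ^ 2 * s⁻¹) := by
      rw [Real.sqrt_mul (sq_nonneg _), Real.sqrt_sq h1q.le]
    rw [h]; congr 1; rw [hs]; field_simp
  have f1 : Real.exp (-tstar * (1 - lamstar)) = Real.sqrt (q / p) := by
    have h : -tstar * (1 - lamstar) = tstar * lamstar - tstar := by ring
    rw [h, Real.exp_sub, hexpt, hexptl, ← Real.sqrt_div hs0.le]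
    congr 1
    rw [hr, hs]; field_simp
  have f2 : p * Real.sqrt (q / p) = Real.sqrt (p * q) := by
    have h : p * Real.sqrt (q / p) = Real.sqrt (p ^ 2 * (q / p)) := by
      rw [Real.sqrt_mul (sq_nonneg p), Real.sqrt_sq hp0.le]
    rw [h]; congr 1; field_simp
  have f3 : Real.exp (-tstar * (0 - lamstar)) = Real.sqrt s := by
    have h : -tstar * (0 - lamstar) = tstar * lamstar := by ring
    rw [h, hexptl]
  have f4 : (1 - p) * Real.sqrt s = Real.sqrt ((1 - p) * (1 - q)) := by
    have h : (1 - p) * Real.sqrt s = Real.sqrt ((1 - p) ^ 2 * s) := by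
      rw [Real.sqrt_mul (sq_nonneg _), Real.sqrt_sq h1p.le]
    rw [h]; congr 1; rw [hs]; field_simp
  constructor
  · rw [e1, e2, e3, e4]
  · rw [f1, f2, f3, f4]

/-- **Exact Chernoff-type identity for Bernoulli variables**: with
`t* = (1/2) log(p(1−q)/(q(1−p)))`, `λ* = log((1−q)/(1−p))/log(p(1−q)/(q(1−p)))` and
`I = −2 log(√(pq) + √((1−p)(1−q)))`: if `x ~ Bernoulli(q)` then `E[exp(t*(x−λ*))] = exp(−I/2)`;
if `y ~ Bernoulli(p)` then `E[exp(−t*(y−λ*))] = exp(−I/2)`; and for an independent family of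
`n₁` Bernoulli(q) variables and `n₂` Bernoulli(p) variables,
`E[exp(t*(Σᵢ(xᵢ−λ*) − Σⱼ(yⱼ−λ*)))] = exp(−(n₁+n₂) I/2)`. -/
theorem bernoulli_chernoff_identity (p q : ℝ) (hq : 0 < q) (hqp : q < p) (hp : p < 1)
    (tstar lamstar I : ℝ)
    (ht : tstar = Real.log (p * (1 - q) / (q * (1 - p))) / 2)
    (hlam : lamstar =
      Real.log ((1 - q) / (1 - p)) / Real.log (p * (1 - q) / (q * (1 - p))))
    (hI : I = -2 * Real.log (Real.sqrt (p * q) + Real.sqrt ((1 - p) * (1 - q))))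
    {Ω : Type*} [MeasurableSpace Ω] (μ : Measure Ω) [IsProbabilityMeasure μ]
    (n₁ n₂ : ℕ) (X : Fin n₁ ⊕ Fin n₂ → Ω → ℝ)
    (hmeas : ∀ i, Measurable (X i))
    (hindep : iIndepFun X μ)
    (hval : ∀ i ω, X i ω = 0 ∨ X i ω = 1)
    (hxdist : ∀ i : Fin n₁, μ {ω | X (Sum.inl i) ω = 1} = ENNReal.ofReal q)
    (hydist : ∀ j : Fin n₂, μ {ω | X (Sum.inr j) ω = 1} = ENNReal.ofReal p) :
    (∀ i : Fin n₁,
      ∫ ω, Real.exp (tstar * (X (Sum.inl i) ω - lamstar)) ∂μ = Real.exp (-I / 2)) ∧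
    (∀ j : Fin n₂,
      ∫ ω, Real.exp (-tstar * (X (Sum.inr j) ω - lamstar)) ∂μ = Real.exp (-I / 2)) ∧
    ∫ ω, Real.exp (tstar * (∑ i : Fin n₁, (X (Sum.inl i) ω - lamstar) -
        ∑ j : Fin n₂, (X (Sum.inr j) ω - lamstar))) ∂μ =
      Real.exp (-((n₁ : ℝ) + n₂) * I / 2) := by
  have hp0 : 0 < p := hq.trans hqp
  have h1p : 0 < 1 - p := by linarith
  have h1q : 0 < 1 - q := by linarith
  obtain ⟨hsc1, hsc2⟩ := scalar_facts p q hq hqp hp tstar lamstar ht hlam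
  have hSpos : 0 < Real.sqrt (p * q) + Real.sqrt ((1 - p) * (1 - q)) := by positivity
  have hexpI : Real.exp (-I / 2) = Real.sqrt (p * q) + Real.sqrt ((1 - p) * (1 - q)) := by
    have h : -I / 2 = Real.log (Real.sqrt (p * q) + Real.sqrt ((1 - p) * (1 - q))) := by
      rw [hI]; ring
    rw [h, Real.exp_log hSpos]
  have hgoal1 : ∀ i : Fin n₁,
      ∫ ω, Real.exp (tstar * (X (Sum.inl i) ω - lamstar)) ∂μ = Real.exp (-I / 2) := by
    intro i
    rw [bern_integral μ (X (Sum.inl i)) (hmeas _) (hval _) q hq.le (hxdist i)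
      (fun x => Real.exp (tstar * (x - lamstar)))]
    rw [hexpI]
    convert hsc1 using 3
  have hgoal2 : ∀ j : Fin n₂,
      ∫ ω, Real.exp (-tstar * (X (Sum.inr j) ω - lamstar)) ∂μ = Real.exp (-I / 2) := by
    intro j
    rw [bern_integral μ (X (Sum.inr j)) (hmeas _) (hval _) p hp0.le (hydist j)
      (fun x => Real.exp (-tstar * (x - lamstar)))]
    rw [hexpI]
    convert hsc2 using 3
  refine ⟨hgoal1, hgoal2, ?_⟩
  -- third part
  set Z : Fin n₁ ⊕ Fin n₂ → Ω → ℝ := fun k ω =>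
    Sum.elim (fun _ => X k ω - lamstar) (fun _ => lamstar - X k ω) k with hZ
  have hZmeas : ∀ k, Measurable (Z k) := by
    rintro (i | j)
    · exact (hmeas _).sub measurable_const
    · exact measurable_const.sub (hmeas _)
  have hZindep : iIndepFun Z μ := by
    have h := hindep.comp
      (fun k => Sum.elim (fun _ (x : ℝ) => x - lamstar) (fun _ (x : ℝ) => lamstar - x) k)
      (by rintro (i | j)
          · exact measurable_id.sub measurable_const
          · exact measurable_const.sub measurable_id)
    convert h using 2 with k
    rcases k with i | j <;> rfl
  have hmgf := hZindep.mgf_sum (t := tstar) hZmeas Finset.univ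
  have hLHS : ∫ ω, Real.exp (tstar * (∑ i : Fin n₁, (X (Sum.inl i) ω - lamstar) -
        ∑ j : Fin n₂, (X (Sum.inr j) ω - lamstar))) ∂μ
      = mgf (∑ k ∈ Finset.univ, Z k) μ tstar := by
    unfold mgf
    congr 1
    funext ω
    congr 1
    congr 1
    rw [Finset.sum_apply, Fintype.sum_sum_type]
    simp only [hZ, Sum.elim_inl, Sum.elim_inr]
    rw [show (∑ j : Fin n₂, (lamstar - X (Sum.inr j) ω))
        = -∑ j : Fin n₂, (X (Sum.inr j) ω - lamstar) by
      rw [← Finset.sum_neg_distrib]; simp [neg_sub]]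
    ring
  rw [hLHS, hmgf]
  have hfac : ∀ k : Fin n₁ ⊕ Fin n₂, mgf (Z k) μ tstar = Real.exp (-I / 2) := by
    rintro (i | j)
    · unfold mgf
      exact hgoal1 i
    · unfold mgf
      rw [← hgoal2 j]
      congr 1
      funext ω
      simp only [hZ, Sum.elim_inr]
      ring_nf
  rw [Finset.prod_congr rfl (fun k _ => hfac k), Finset.prod_const, Finset.card_univ,
    Fintype.card_sum, Fintype.card_fin, Fintype.card_fin, ← Real.exp_nat_mul]
  congr 1
  push_cast
  ring
end
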